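/- arXiv:2501.16742 — 11 statements merged into one kernel-verified Lean document; each statement's English description precedes it below -/
import Mathlib

section
/- For all integers r ≥ 14, t with 0 ≤ t ≤ 2r + 1, and s with 2 ≤ s ≤ 2r, one has C(2r² + 2s + t, 2s) ≥ C(2r² + 4r + t − 1, 2s − 1). -/
/-- Ratio comparison: `asc(n+d+1,k)/asc(n+1,k) ≤ ((n+d+1)/(n+1))^k`. -/
lemma aux_asc (k n d : ℕ) :
    (n + d + 1).ascFactorial k * (n + 1) ^ k ≤
      (n + 1).ascFactorial k * (n + d + 1) ^ k := by
  induction k with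
  | zero => simp
  | succ k ih =>
    rw [Nat.ascFactorial_succ, Nat.ascFactorial_succ, pow_succ, pow_succ]
    calc (n + d + 1 + k) * (n + d + 1).ascFactorial k * ((n + 1) ^ k * (n + 1))
        = (n + d + 1 + k) * (n + 1) * ((n + d + 1).ascFactorial k * (n + 1) ^ k) := by ring
      _ ≤ (n + d + 1 + k) * (n + 1) * ((n + 1).ascFactorial k * (n + d + 1) ^ k) :=
          Nat.mul_le_mul_left _ ih
      _ ≤ (n + 1 + k) * (n + d + 1) * ((n + 1).ascFactorial k * (n + d + 1) ^ k) := by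
          apply Nat.mul_le_mul_right
          nlinarith
      _ = (n + 1 + k) * (n + 1).ascFactorial k * ((n + d + 1) ^ k * (n + d + 1)) := by ring

/-- Analytic bound via `exp 2 < 8`. -/
lemma aux_pow (n s k d : ℕ) (hs : 1 ≤ s) (hn : 14 * s ≤ n) (hkd : k * d ≤ 2 * (n + 1)) :
    2 * s * (n + d + 1) ^ k ≤ (n + 2 * s) * (n + 1) ^ k := by
  have h8 : Real.exp 2 < 8 := by
    have h1 := Real.exp_one_lt_d9
    have h2 : Real.exp 2 = Real.exp 1 * Real.exp 1 := by
      rw [← Real.exp_add]; norm_num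
    nlinarith [Real.exp_pos 1]
  have hpos : (0:ℝ) < (n:ℝ) + 1 := by positivity
  have key : ((n:ℝ) + d + 1) ^ k ≤ ((n:ℝ) + 1) ^ k * 8 := by
    have heq : (n:ℝ) + d + 1 = ((n:ℝ) + 1) * (1 + d / ((n:ℝ) + 1)) := by
      field_simp
      ring
    have hx : (0:ℝ) ≤ (d:ℝ) / ((n:ℝ) + 1) := by positivity
    have h3 : (1 + (d:ℝ) / ((n:ℝ) + 1)) ^ k ≤ Real.exp ((k:ℝ) * ((d:ℝ) / ((n:ℝ) + 1))) := by
      calc (1 + (d:ℝ) / ((n:ℝ) + 1)) ^ k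
          ≤ Real.exp ((d:ℝ) / ((n:ℝ) + 1)) ^ k := by
            apply pow_le_pow_left₀ (by linarith)
            linarith [Real.add_one_le_exp ((d:ℝ) / ((n:ℝ) + 1))]
        _ = Real.exp ((k:ℝ) * ((d:ℝ) / ((n:ℝ) + 1))) := by
            rw [← Real.exp_nat_mul]
    have h4 : (k:ℝ) * ((d:ℝ) / ((n:ℝ) + 1)) ≤ 2 := by
      rw [mul_div_assoc', div_le_iff₀ hpos]
      have : ((k * d : ℕ) : ℝ) ≤ ((2 * (n+1) : ℕ) : ℝ) := by exact_mod_cast hkd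
      push_cast at this
      linarith
    calc ((n:ℝ) + d + 1) ^ k = ((n:ℝ) + 1) ^ k * (1 + (d:ℝ) / ((n:ℝ) + 1)) ^ k := by
          rw [heq, mul_pow]
      _ ≤ ((n:ℝ) + 1) ^ k * Real.exp ((k:ℝ) * ((d:ℝ) / ((n:ℝ) + 1))) := by
          apply mul_le_mul_of_nonneg_left h3 (by positivity)
      _ ≤ ((n:ℝ) + 1) ^ k * Real.exp 2 := by
          apply mul_le_mul_of_nonneg_left (Real.exp_le_exp.mpr h4) (by positivity)
      _ ≤ ((n:ℝ) + 1) ^ k * 8 := by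
          apply mul_le_mul_of_nonneg_left h8.le (by positivity)
  have hfin : (2 * s : ℝ) * ((n:ℝ) + d + 1) ^ k ≤ ((n:ℝ) + 2 * s) * ((n:ℝ) + 1) ^ k := by
    calc (2 * s : ℝ) * ((n:ℝ) + d + 1) ^ k
        ≤ (2 * s : ℝ) * (((n:ℝ) + 1) ^ k * 8) := by
          apply mul_le_mul_of_nonneg_left key (by positivity)
      _ = (16 * s : ℝ) * ((n:ℝ) + 1) ^ k := by ring
      _ ≤ ((n:ℝ) + 2 * s) * ((n:ℝ) + 1) ^ k := by
          apply mul_le_mul_of_nonneg_right _ (by positivity)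
          have : (14 * s : ℝ) ≤ (n : ℝ) := by exact_mod_cast hn
          have : (1:ℝ) ≤ (s:ℝ) := by exact_mod_cast hs
          linarith
  have := hfin
  exact_mod_cast (by push_cast; convert hfin using 2 <;> ring : ((2 * s * (n + d + 1) ^ k : ℕ) : ℝ) ≤ ((n + 2 * s) * (n + 1) ^ k : ℕ))

theorem stmt_2 (r t s : ℕ) (hr : 14 ≤ r) (ht : t ≤ 2 * r + 1)
    (hs1 : 2 ≤ s) (hs2 : s ≤ 2 * r) :
    Nat.choose (2 * r ^ 2 + 2 * s + t) (2 * s) ≥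
      Nat.choose (2 * r ^ 2 + 4 * r + t - 1) (2 * s - 1) := by
  set n := 2 * r ^ 2 + t with hn
  set k := 2 * s - 1 with hk
  set d := 4 * r - 2 * s with hd
  have hk1 : k + 1 = 2 * s := by omega
  have harg1 : 2 * r ^ 2 + 2 * s + t = n + (k + 1) := by omega
  have harg2 : 2 * r ^ 2 + 4 * r + t - 1 = n + d + k := by
    have : 14 ≤ r := hr
    omega
  rw [harg1, harg2, ge_iff_le, ← hk1]
  -- multiply both sides by (k+1)!
  refine Nat.le_of_mul_le_mul_left ?_ (Nat.factorial_pos (k+1))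
  have e1 : Nat.factorial (k+1) * (n + (k+1)).choose (k+1) = (n + 1).ascFactorial (k+1) :=
    (Nat.ascFactorial_eq_factorial_mul_choose n (k+1)).symm
  have e2 : Nat.factorial k * (n + d + k).choose k = (n + d + 1).ascFactorial k :=
    (Nat.ascFactorial_eq_factorial_mul_choose (n + d) k).symm
  rw [e1, Nat.factorial_succ]
  calc (k + 1) * Nat.factorial k * (n + d + k).choose k
      = (k + 1) * ((n + d + 1).ascFactorial k) := by rw [mul_assoc, e2]
    _ ≤ (n + 1 + k) * (n + 1).ascFactorial k := by
        refine Nat.le_of_mul_le_mul_right ?_ (show 0 < (n + d + 1) ^ k by positivity)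
        calc (k + 1) * (n + d + 1).ascFactorial k * (n + d + 1) ^ k
            = ((k + 1) * (n + d + 1) ^ k) * (n + d + 1).ascFactorial k := by ring
          _ ≤ ((n + k + 1) * (n + 1) ^ k) * (n + d + 1).ascFactorial k := by
              apply Nat.mul_le_mul_right
              have := aux_pow n s k d (by omega) (by nlinarith) (by
                obtain ⟨c, hc⟩ : ∃ c, 4 * r = 2 * s + c := ⟨4 * r - 2 * s, by omega⟩
                have hdc : d = c := by omega
                have hc' : (4 * r : ℤ) = 2 * s + c := by exact_mod_cast hc
                have h4 : 2 * s * c ≤ 4 * r ^ 2 := by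
                  zify
                  nlinarith [sq_nonneg (2 * (s:ℤ) - c)]
                calc k * d ≤ 2 * s * c := by
                      rw [hdc]; exact Nat.mul_le_mul_right _ (by omega)
                  _ ≤ 4 * r ^ 2 := h4
                  _ ≤ 2 * (n + 1) := by simp only [hn]; linarith)
              calc (k + 1) * (n + d + 1) ^ k = 2 * s * (n + d + 1) ^ k := by rw [hk1]
                _ ≤ (n + 2 * s) * (n + 1) ^ k := this
                _ = (n + k + 1) * (n + 1) ^ k := by rw [← hk1]; ring_nf
          _ = (n + k + 1) * ((n + d + 1).ascFactorial k * (n + 1) ^ k) := by ring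
          _ ≤ (n + k + 1) * ((n + 1).ascFactorial k * (n + d + 1) ^ k) :=
              Nat.mul_le_mul_left _ (aux_asc k n d)
          _ = (n + 1 + k) * (n + 1).ascFactorial k * (n + d + 1) ^ k := by ring
    _ = (n + 1).ascFactorial (k + 1) := (Nat.ascFactorial_succ).symm
end

section
/- For all integers r ≥ 14, t with 0 ≤ t ≤ 2r − 1, and s with 2 ≤ s ≤ 2r − 1, one has C(2r² − 2r + t + 2s + 1, 2s) ≥ C(2r² + 2r + t − 2, 2s − 1). -/
/-- `(A+B)^8 ≥ A^8 + 8*B*A^7` in ℕ. -/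
lemma pow8_lb (A B : ℕ) : A^8 + 8*B*A^7 ≤ (A+B)^8 := by
  have h : (A+B)^8 = A^8 + 8*B*A^7 +
      (28*A^6*B^2 + 56*A^5*B^3 + 70*A^4*B^4 + 56*A^3*B^5 + 28*A^2*B^6 + 8*A*B^7 + B^8) := by
    ring
  omega

/-- Key single-step estimate: `B^8*(m+c) ≤ (B+c)^8*m` when `B+c ≤ 8m`. -/
lemma sub1 (B c m : ℕ) (hc : 1 ≤ c) (h : B + c ≤ 8*m) : B^8*(m+c) ≤ (B+c)^8*m := by
  have hA1 : 1 ≤ B + c := by omega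
  have h2 : B^8*(B+c+c)^8 ≤ (B+c)^8*(B+c)^8 := by
    calc B^8*(B+c+c)^8 = (B*(B+c+c))^8 := by rw [mul_pow]
    _ ≤ ((B+c)*(B+c))^8 := by
        apply Nat.pow_le_pow_left
        nlinarith
    _ = (B+c)^8*(B+c)^8 := by rw [mul_pow]
  have h3 : (B+c)^8*(m+c) ≤ (B+c+c)^8*m := by
    calc (B+c)^8*(m+c) = (B+c)^8*m + (B+c)*(B+c)^7*c := by ring
    _ ≤ (B+c)^8*m + (8*m)*(B+c)^7*c := by
        have := Nat.mul_le_mul_right ((B+c)^7*c) h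
        nlinarith
    _ = ((B+c)^8 + 8*c*(B+c)^7)*m := by ring
    _ ≤ (B+c+c)^8*m := Nat.mul_le_mul_right m (pow8_lb (B+c) c)
  have hpos : 0 < (B+c+c)^8 := by positivity
  have chain : (B^8*(m+c))*(B+c+c)^8 ≤ ((B+c)^8*m)*(B+c+c)^8 := by
    calc (B^8*(m+c))*(B+c+c)^8 = (B^8*(B+c+c)^8)*(m+c) := by ring
    _ ≤ ((B+c)^8*(B+c)^8)*(m+c) := Nat.mul_le_mul_right _ h2
    _ = (B+c)^8*((B+c)^8*(m+c)) := by ring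
    _ ≤ (B+c)^8*((B+c+c)^8*m) := Nat.mul_le_mul_left _ h3
    _ = ((B+c)^8*m)*(B+c+c)^8 := by ring
  exact Nat.le_of_mul_le_mul_right chain hpos

/-- Iterated estimate. -/
lemma claimC (m c : ℕ) (hc : 1 ≤ c) :
    ∀ d, c*d ≤ 8*m → (m+c)^d * (8*m - c*d)^8 ≤ m^d * (8*m)^8 := by
  intro d
  induction d with
  | zero => simp
  | succ d ih =>
    intro h
    have hmul : c*(d+1) = c*d + c := by ring
    have hd : c*d ≤ 8*m := by omega
    have hd1 : c*d + c ≤ 8*m := by omega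
    have hsub : 8*m - c*(d+1) + c = 8*m - c*d := by omega
    have hs1 : (8*m - c*(d+1)) + c ≤ 8*m := by omega
    calc (m+c)^(d+1) * (8*m - c*(d+1))^8
        = (m+c)^d * ((8*m - c*(d+1))^8*(m+c)) := by ring
    _ ≤ (m+c)^d * ((8*m - c*(d+1) + c)^8*m) :=
        Nat.mul_le_mul_left _ (sub1 _ c m hc hs1)
    _ = m * ((m+c)^d * (8*m - c*d)^8) := by rw [hsub]; ring
    _ ≤ m * (m^d * (8*m)^8) := Nat.mul_le_mul_left _ (ih hd)
    _ = m^(d+1) * (8*m)^8 := by ring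

/-- From the 8-th power inequality to the `d`-th power inequality. -/
lemma lemB (m c d s : ℕ) (hc : 1 ≤ c) (hcd : c*d < 8*m)
    (hD : 2*s*(8*m)^8 ≤ (m-1)*(8*m - c*d)^8) : 2*s*(m+c)^d ≤ (m-1)*m^d := by
  have hC := claimC m c hc d (le_of_lt hcd)
  have hpos : 0 < (8*m - c*d)^8 := by
    have : 0 < 8*m - c*d := by omega
    positivity
  have chain : (2*s*(m+c)^d)*(8*m - c*d)^8 ≤ ((m-1)*m^d)*(8*m - c*d)^8 := by
    calc (2*s*(m+c)^d)*(8*m - c*d)^8 = 2*s*((m+c)^d*(8*m - c*d)^8) := by ring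
    _ ≤ 2*s*(m^d * (8*m)^8) := Nat.mul_le_mul_left _ hC
    _ = m^d*(2*s*(8*m)^8) := by ring
    _ ≤ m^d*((m-1)*(8*m - c*d)^8) := Nat.mul_le_mul_left _ hD
    _ = ((m-1)*m^d)*(8*m - c*d)^8 := by ring
  exact Nat.le_of_mul_le_mul_right chain hpos

/-- ascFactorial comparison. -/
lemma lemA (b C : ℕ) (h : b ≤ C) :
    ∀ d, (Nat.ascFactorial C d) * b^d ≤ C^d * Nat.ascFactorial b d := by
  intro d
  induction d with
  | zero => simp
  | succ d ih =>
    rw [Nat.ascFactorial_succ, Nat.ascFactorial_succ]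
    calc (C+d) * Nat.ascFactorial C d * b^(d+1)
        = ((C+d)*b) * (Nat.ascFactorial C d * b^d) := by ring
    _ ≤ (C*(b+d)) * (C^d * Nat.ascFactorial b d) := by
        apply Nat.mul_le_mul
        · nlinarith
        · exact ih
    _ = C^(d+1) * ((b+d) * Nat.ascFactorial b d) := by ring

/-- Star lemma: the product inequality. -/
lemma star (q c d : ℕ) (hq : 1 ≤ q)
    (hB : (c+1)*(q+1+c)^d ≤ q*(q+1)^d) :
    (c+1) * Nat.ascFactorial (q+1+c) d ≤ Nat.ascFactorial q (d+1) := by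
  have h1 := lemA (q+1) (q+1+c) (by omega) d
  have hmpos : 0 < (q+1)^d := by positivity
  have chain : ((c+1) * Nat.ascFactorial (q+1+c) d) * (q+1)^d ≤
      (Nat.ascFactorial q (d+1)) * (q+1)^d := by
    calc ((c+1) * Nat.ascFactorial (q+1+c) d) * (q+1)^d
        = (c+1) * (Nat.ascFactorial (q+1+c) d * (q+1)^d) := by ring
    _ ≤ (c+1) * ((q+1+c)^d * Nat.ascFactorial (q+1) d) := Nat.mul_le_mul_left _ h1
    _ = ((c+1)*(q+1+c)^d) * Nat.ascFactorial (q+1) d := by ring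
    _ ≤ (q*(q+1)^d) * Nat.ascFactorial (q+1) d := Nat.mul_le_mul_right _ hB
    _ = (q * Nat.ascFactorial (q+1) d) * (q+1)^d := by ring
    _ = Nat.ascFactorial q (d+1) * (q+1)^d := by
        rw [Nat.succ_ascFactorial q d, Nat.ascFactorial_succ]
  exact Nat.le_of_mul_le_mul_right chain hmpos

/-- The integer core inequality. -/
lemma intCore (u v T M G : ℤ) (hu : 24 ≤ u) (hv : -u ≤ v) (hv2 : v ≤ u) (hT : 0 ≤ T)
    (hM : 2*M = u*u+6*u+14+2*T) (hG : G = v*v+2*u-2*v+11+2*T) :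
    (u-v+4)*(8*M)^8 ≤ (M-1)*(6*M+G)^8 := by
  have hG0 : 0 ≤ G := by nlinarith [sq_nonneg (v-1)]
  have hM0 : 367 ≤ M := by nlinarith
  have core : 365*33554432*(u-v+4)*(u*u+6*u+14+2*T) ≤
      364*(1679616*(u*u+6*u+14+2*T)^2 + 4478976*(u*u+6*u+14+2*T)*(v*v+2*u-2*v+11+2*T)
        + 5225472*(v*v+2*u-2*v+11+2*T)^2) := by
    nlinarith [sq_nonneg (v+4), sq_nonneg (u-24), sq_nonneg (v*v-2*v+2*u),
      mul_nonneg (sub_nonneg.2 hu) (sq_nonneg (v+4)), sq_nonneg (u*v), mul_nonneg hT hT,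
      mul_nonneg hT (sub_nonneg.2 hu), mul_nonneg hT (by linarith : (0:ℤ) ≤ u + v)]
  -- rewrite core in terms of M and G :  X = 2M, G
  have core' : 365*((u-v+4)*16777216*M) ≤
      364*(1679616*M^2 + 8*279936*M*G + 28*46656*G^2) := by nlinarith [core]
  -- bracket nonneg
  have hbr : (0:ℤ) ≤ 1679616*M^2 + 8*279936*M*G + 28*46656*G^2 := by positivity
  have hS : (u-v+4)*16777216*M^2 ≤ (M-1)*(1679616*M^2 + 8*279936*M*G + 28*46656*G^2) := by
    nlinarith [mul_le_mul_of_nonneg_left core' (by linarith : (0:ℤ) ≤ M), hbr]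
  -- binomial lower bound for (6M+G)^8
  have hexp : (6*M+G)^8 = 1679616*M^8 + 8*279936*M^7*G + 28*46656*M^6*G^2
      + G^3*(56*(6*M)^5 + 70*(6*M)^4*G + 56*(6*M)^3*G^2 + 28*(6*M)^2*G^3 + 8*(6*M)*G^4 + G^5) := by
    ring
  have hM6 : (0:ℤ) ≤ 6*M := by linarith
  have htail : 0 ≤ G^3*(56*(6*M)^5 + 70*(6*M)^4*G + 56*(6*M)^3*G^2 + 28*(6*M)^2*G^3
      + 8*(6*M)*G^4 + G^5) := by
    apply mul_nonneg (pow_nonneg hG0 3)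
    have h5 := pow_nonneg hM6 5
    have h4 := pow_nonneg hM6 4
    have h3 := pow_nonneg hM6 3
    have h2 := pow_nonneg hM6 2
    have g2 := pow_nonneg hG0 2
    have g3 := pow_nonneg hG0 3
    have g4 := pow_nonneg hG0 4
    have g5 := pow_nonneg hG0 5
    positivity
  have hM60 : (0:ℤ) ≤ M^6 := by positivity
  calc (u-v+4)*(8*M)^8 = ((u-v+4)*16777216*M^2)*M^6 := by ring
  _ ≤ ((M-1)*(1679616*M^2 + 8*279936*M*G + 28*46656*G^2))*M^6 :=
      mul_le_mul_of_nonneg_right hS hM60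
  _ = (M-1)*(1679616*M^8 + 8*279936*M^7*G + 28*46656*M^6*G^2) := by ring
  _ ≤ (M-1)*((6*M+G)^8) := by
      apply mul_le_mul_of_nonneg_left _ (by linarith : (0:ℤ) ≤ M-1)
      rw [hexp]; linarith


open scoped Nat in
set_option maxHeartbeats 1600000 in
theorem stmt_3 (r t s : ℕ) (hr : 14 ≤ r) (ht : t ≤ 2 * r - 1)
    (hs1 : 2 ≤ s) (hs2 : s ≤ 2 * r - 1) :
    Nat.choose (2 * r ^ 2 - 2 * r + t + 2 * s + 1) (2 * s) ≥
      Nat.choose (2 * r ^ 2 + 2 * r + t - 2) (2 * s - 1) := by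
  have hr2 : 2*r + 2 ≤ r^2 := by nlinarith
  by_cases hcase : s = 2*r - 1
  · -- Pascal case
    have h1 : 2*r^2 + 2*r + t - 2 + 1 = 2 * r ^ 2 - 2 * r + t + 2 * s + 1 := by
      subst hcase; omega
    have h2 : 2*s - 1 + 1 = 2*s := by omega
    have key : Nat.choose (2*r^2 + 2*r + t - 2) (2*s-1) ≤
        Nat.choose (2*r^2 + 2*r + t - 2 + 1) (2*s - 1 + 1) := by
      rw [Nat.choose_succ_succ]
      exact Nat.le_add_right _ _
    rw [h1, h2] at key
    exact key
  -- main case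
  have hs2' : s ≤ 2*r - 2 := by omega
  set p : ℕ := 2*r^2 - 2*r + t + 1 with hp
  set q : ℕ := p + 1 with hq
  set m : ℕ := q + 1 with hm
  set c : ℕ := 2*s - 1 with hc
  set d : ℕ := 4*r - 2*s - 3 with hd
  set e : ℕ := s - 2 with he
  set f : ℕ := 2*r - 2 - s with hf
  have hc1 : c + 1 = 2*s := by omega
  have hd1 : 1 ≤ d := by omega
  have hef : e + f + 4 = 2*r := by omega
  have hse : s = e + 2 := by omega
  have hcz : (c:ℤ) = 2*(e:ℤ) + 3 := by
    have : c = 2*e + 3 := by omega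
    exact_mod_cast this
  have hdz : (d:ℤ) = 2*(f:ℤ) + 1 := by
    have : d = 2*f + 1 := by omega
    exact_mod_cast this
  have hmn : m + 2*r = 2*r^2 + t + 3 := by omega
  have hmz : (m:ℤ) + 2*(r:ℤ) = 2*(r:ℤ)^2 + (t:ℤ) + 3 := by exact_mod_cast hmn
  have hrz : (e:ℤ) + (f:ℤ) + 4 = 2*(r:ℤ) := by exact_mod_cast hef
  have hMz : 2*(m:ℤ) = ((e:ℤ)+(f:ℤ))*((e:ℤ)+(f:ℤ)) + 6*((e:ℤ)+(f:ℤ)) + 14 + 2*(t:ℤ) := by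
    linear_combination 2*hmz - (2*(r:ℤ) + (e:ℤ) + (f:ℤ) + 2) * hrz
  have hGz : 2*(m:ℤ) - (c:ℤ)*(d:ℤ) =
      ((f:ℤ)-(e:ℤ))*((f:ℤ)-(e:ℤ)) + 2*((e:ℤ)+(f:ℤ)) - 2*((f:ℤ)-(e:ℤ)) + 11 + 2*(t:ℤ) := by
    linear_combination hMz - (d:ℤ)*hcz - (2*(e:ℤ)+3)*hdz
  have main := intCore ((e:ℤ)+(f:ℤ)) ((f:ℤ)-(e:ℤ)) (t:ℤ) (m:ℤ) (2*(m:ℤ) - (c:ℤ)*(d:ℤ))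
    (by omega) (by omega) (by omega) (by positivity) hMz hGz
  -- convert main to ℕ statement hD
  have hG0 : (0:ℤ) ≤ 2*(m:ℤ) - (c:ℤ)*(d:ℤ) := by
    nlinarith [hGz, sq_nonneg ((f:ℤ)-(e:ℤ)-1), Int.ofNat_nonneg e, Int.ofNat_nonneg f,
      Int.ofNat_nonneg t]
  have hcd2 : c*d ≤ 2*m := by
    have : (c:ℤ)*(d:ℤ) ≤ 2*(m:ℤ) := by linarith
    exact_mod_cast this
  have hcd8 : c*d ≤ 8*m := by omega
  have hcdlt : c*d < 8*m := by omega
  have h2sz : ((e:ℤ)+(f:ℤ)) - ((f:ℤ)-(e:ℤ)) + 4 = 2*(s:ℤ) := by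
    have : (s:ℤ) = (e:ℤ) + 2 := by exact_mod_cast hse
    linarith
  have hDz : 2*(s:ℤ)*(8*(m:ℤ))^8 ≤ (q:ℤ)*(8*(m:ℤ) - (c:ℤ)*(d:ℤ))^8 := by
    have hmq : (m:ℤ) = (q:ℤ) + 1 := by exact_mod_cast hm
    calc 2*(s:ℤ)*(8*(m:ℤ))^8
        = (((e:ℤ)+(f:ℤ)) - ((f:ℤ)-(e:ℤ)) + 4)*(8*(m:ℤ))^8 := by rw [h2sz]
    _ ≤ ((m:ℤ)-1)*(6*(m:ℤ) + (2*(m:ℤ) - (c:ℤ)*(d:ℤ)))^8 := main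
    _ = ((m:ℤ)-1)*(8*(m:ℤ) - (c:ℤ)*(d:ℤ))^8 := by
        rw [show 6*(m:ℤ) + (2*(m:ℤ) - (c:ℤ)*(d:ℤ)) = 8*(m:ℤ) - (c:ℤ)*(d:ℤ) from by ring]
    _ = (q:ℤ)*(8*(m:ℤ) - (c:ℤ)*(d:ℤ))^8 := by
        rw [show (m:ℤ) - 1 = (q:ℤ) from by rw [hmq]; ring]
  have hD : 2*s*(8*m)^8 ≤ q*(8*m - c*d)^8 := by
    have hcast : ((8*m - c*d : ℕ) : ℤ) = 8*(m:ℤ) - (c:ℤ)*(d:ℤ) := by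
      rw [Nat.cast_sub hcd8]; push_cast; ring
    have := hDz
    rw [← hcast] at this
    exact_mod_cast this
  have hqm : q = m - 1 := by omega
  rw [hqm] at hD
  have hBB := lemB m c d s (by omega) hcdlt hD
  rw [← hqm] at hBB
  rw [← hc1] at hBB
  rw [hm] at hBB
  have hBB' : (c+1)*(q+1+c)^d ≤ q*(q+1)^d := by
    have hq11 : q + 1 - 1 = q := by omega
    calc (c+1)*(q+1+c)^d = (c+1)*((q+1)+c)^d := by ring_nf
    _ ≤ (q+1-1)*(q+1)^d := hBB
    _ = q*(q+1)^d := by rw [hq11]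
  have hstar := star q c d (by omega) hBB'
  -- assemble with factorials
  have hq1c : q + 1 + c = p + 2*s + 1 := by omega
  rw [hq1c] at hstar
  rw [hc1] at hstar
  -- hstar : 2*s * asc (p+2*s+1) d ≤ asc q (d+1), q = p+1
  have hA : 2 * r ^ 2 - 2 * r + t + 2 * s + 1 = p + 2*s := by omega
  have hB2 : 2 * r ^ 2 + 2 * r + t - 2 = p + 2*s + d := by omega
  rw [hA, hB2]
  have Kpos : 0 < (2*s)! * (p ! * (p+1+d)!) := by positivity
  refine Nat.le_of_mul_le_mul_right ?_ Kpos
  have E1 : Nat.choose (p+2*s) (2*s) * (2*s)! * p ! = (p+2*s)! := by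
    have h := Nat.choose_mul_factorial_mul_factorial (show 2*s ≤ p + 2*s by omega)
    rwa [Nat.add_sub_cancel] at h
  have E2 : Nat.choose (p+2*s+d) (2*s-1) * (2*s-1)! * (p+1+d)! = (p+2*s+d)! := by
    have h := Nat.choose_mul_factorial_mul_factorial (show 2*s-1 ≤ p + 2*s + d by omega)
    have : p + 2*s + d - (2*s - 1) = p + 1 + d := by omega
    rwa [this] at h
  have E3 : (p+2*s)! * Nat.ascFactorial (p+2*s+1) d = (p+2*s+d)! :=
    Nat.factorial_mul_ascFactorial (p+2*s) d
  have E4 : p ! * Nat.ascFactorial (p+1) (d+1) = (p+1+d)! := by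
    have h := Nat.factorial_mul_ascFactorial p (d+1)
    have : p + (d+1) = p + 1 + d := by omega
    rwa [this] at h
  have E5 : (2*s)! = 2*s * (2*s-1)! := by
    have h1 : 2*s = (2*s-1) + 1 := by omega
    rw [h1, Nat.factorial_succ, ← h1]
  have hq' : Nat.ascFactorial q (d+1) = Nat.ascFactorial (p+1) (d+1) := by rw [hq]
  rw [hq'] at hstar
  calc Nat.choose (p+2*s+d) (2*s-1) * ((2*s)! * (p ! * (p+1+d)!))
      = (Nat.choose (p+2*s+d) (2*s-1) * (2*s-1)! * (p+1+d)!) * (2*s) * p ! := by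
        rw [E5]; ring
  _ = (p+2*s+d)! * (2*s) * p ! := by rw [E2]
  _ = ((p+2*s)! * Nat.ascFactorial (p+2*s+1) d) * (2*s) * p ! := by rw [E3]
  _ = ((p+2*s)! * p !) * (2*s * Nat.ascFactorial (p+2*s+1) d) := by ring
  _ ≤ ((p+2*s)! * p !) * Nat.ascFactorial (p+1) (d+1) := Nat.mul_le_mul_left _ hstar
  _ = (p+2*s)! * (p ! * Nat.ascFactorial (p+1) (d+1)) := by ring
  _ = (p+2*s)! * (p+1+d)! := by rw [E4]
  _ = (Nat.choose (p+2*s) (2*s) * (2*s)! * p !) * (p+1+d)! := by rw [E1]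
  _ = Nat.choose (p+2*s) (2*s) * ((2*s)! * (p ! * (p+1+d)!)) := by ring
end

section
/- For all integers r ≥ 14 and s with 2 ≤ s ≤ 2r − 1, one has log(1 + r²/s) > (4r − 2s)·(log(1 + (2s−1)/(2r²)) + A/(2r²)), where A = 1.00128 and log denotes the natural logarithm over the real numbers. -/
/-!
Since `s ≤ 2r`, the left side is at least `log (1 + r / 2) ≥ log 8 > 2.079`. On the right,
`log (1 + x) ≤ x` and AM-GM give `(4r - 2s)(2s - 1 + A) / (2r²) ≤ (4r + A - 1)² / (8r²)`,
which is barely above `2` because `A - 1` is tiny.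
-/

open Real

lemma Real.log_eight_gt_d9 : 2.0794415409 < log 8 := by
  rw [show (8 : ℝ) = 2 ^ 3 by norm_num, log_pow]
  linarith [log_two_gt_d9]

lemma half_le_sq_div {R S : ℝ} (hR : 0 ≤ R) (hS : 0 < S) (hSR : S ≤ 2 * R) :
    R / 2 ≤ R ^ 2 / S := by
  rw [le_div_iff₀ hS]
  nlinarith

lemma mul_log_one_add_add_div_le {R S A : ℝ} (hR : 0 < R) (hS : 1 ≤ 2 * S) (hSR : S ≤ 2 * R) :
    (4 * R - 2 * S) * (log (1 + (2 * S - 1) / (2 * R ^ 2)) + A / (2 * R ^ 2)) ≤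
      (4 * R + A - 1) ^ 2 / (8 * R ^ 2) := by
  have hx : 0 ≤ (2 * S - 1) / (2 * R ^ 2) := by
    apply div_nonneg <;> nlinarith
  have hlog : log (1 + (2 * S - 1) / (2 * R ^ 2)) ≤ (2 * S - 1) / (2 * R ^ 2) := by
    linarith [log_le_sub_one_of_pos (by linarith : 0 < 1 + (2 * S - 1) / (2 * R ^ 2))]
  calc (4 * R - 2 * S) * (log (1 + (2 * S - 1) / (2 * R ^ 2)) + A / (2 * R ^ 2))
      ≤ (4 * R - 2 * S) * ((2 * S - 1) / (2 * R ^ 2) + A / (2 * R ^ 2)) := by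
        gcongr
        linarith
    _ = 4 * (4 * R - 2 * S) * (2 * S - 1 + A) / (8 * R ^ 2) := by
        field_simp
        ring
    _ ≤ (4 * R + A - 1) ^ 2 / (8 * R ^ 2) := by
        gcongr
        convert four_mul_le_sq_add (4 * R - 2 * S) (2 * S - 1 + A) using 2
        ring

theorem stmt_7 (r s : ℕ) (hr : 14 ≤ r) (hs1 : 2 ≤ s) (hs2 : s ≤ 2 * r - 1) :
    Real.log (1 + (r : ℝ) ^ 2 / (s : ℝ)) >
      (4 * (r : ℝ) - 2 * (s : ℝ)) *
        (Real.log (1 + (2 * (s : ℝ) - 1) / (2 * (r : ℝ) ^ 2)) +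
          1.00128 / (2 * (r : ℝ) ^ 2)) := by
  have hR : (14 : ℝ) ≤ r := by exact_mod_cast hr
  have hS : (2 : ℝ) ≤ s := by exact_mod_cast hs1
  have hSR : (s : ℝ) ≤ 2 * r := by exact_mod_cast (by omega : s ≤ 2 * r)
  calc (4 * (r : ℝ) - 2 * s) * (log (1 + (2 * s - 1) / (2 * (r : ℝ) ^ 2)) + 1.00128 / (2 * r ^ 2))
      ≤ (4 * r + 1.00128 - 1) ^ 2 / (8 * (r : ℝ) ^ 2) :=
        mul_log_one_add_add_div_le (by positivity) (by linarith) hSR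
    _ < log 8 := by
        rw [div_lt_iff₀ (by positivity)]
        nlinarith [log_eight_gt_d9]
    _ ≤ log (1 + (r : ℝ) ^ 2 / s) := by
        gcongr
        linarith [half_le_sq_div (by positivity) (by positivity) hSR]
end

section
/- For all integers r ≥ 14 and s with 2 ≤ s ≤ 2r − 2, one has log(1 + (2r² − 2r + 1)/(2s)) > (4r − 2s − 2)·(log(1 + (2s−1)/(2r² − 2r + 1)) + A/(2r² − 2r + 1)), where A = 1.00067 and log denotes the natural logarithm over the real numbers. -/
theorem stmt_9 (r s : ℕ) (hr : 14 ≤ r) (hs1 : 2 ≤ s) (hs2 : s ≤ 2 * r - 2) :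
    Real.log (1 + (2 * (r : ℝ) ^ 2 - 2 * (r : ℝ) + 1) / (2 * (s : ℝ))) >
      (4 * (r : ℝ) - 2 * (s : ℝ) - 2) *
        (Real.log (1 + (2 * (s : ℝ) - 1) / (2 * (r : ℝ) ^ 2 - 2 * (r : ℝ) + 1)) +
          1.00067 / (2 * (r : ℝ) ^ 2 - 2 * (r : ℝ) + 1)) := by
  have hrR : (14 : ℝ) ≤ (r : ℝ) := by exact_mod_cast hr
  have hsR : (2 : ℝ) ≤ (s : ℝ) := by exact_mod_cast hs1
  have hs2' : (s : ℝ) ≤ 2 * (r : ℝ) - 2 := by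
    have h : s + 2 ≤ 2 * r := by omega
    have := (Nat.cast_le (α := ℝ)).2 h
    push_cast at this
    linarith
  set N : ℝ := 2 * (r : ℝ) ^ 2 - 2 * (r : ℝ) + 1 with hNdef
  have hN : (365 : ℝ) ≤ N := by nlinarith
  have hNpos : (0 : ℝ) < N := by linarith
  have hx : (0 : ℝ) ≤ (2 * (s : ℝ) - 1) / N := div_nonneg (by linarith) hNpos.le
  -- log(1+x) ≤ x
  have hlog1 : Real.log (1 + (2 * (s : ℝ) - 1) / N) ≤ (2 * (s : ℝ) - 1) / N := by
    have h := Real.log_le_sub_one_of_pos (x := 1 + (2 * (s : ℝ) - 1) / N) (by linarith)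
    linarith
  have hfac : (2 : ℝ) ≤ 4 * (r : ℝ) - 2 * (s : ℝ) - 2 := by linarith
  -- RHS ≤ (4r-2s-2)(2s-1+A)/N ≤ 2.07
  have hrhs : (4 * (r : ℝ) - 2 * (s : ℝ) - 2) *
        (Real.log (1 + (2 * (s : ℝ) - 1) / N) + 1.00067 / N) ≤ 2.07 := by
    have h1 : (4 * (r : ℝ) - 2 * (s : ℝ) - 2) *
        (Real.log (1 + (2 * (s : ℝ) - 1) / N) + 1.00067 / N) ≤
        (4 * (r : ℝ) - 2 * (s : ℝ) - 2) * ((2 * (s : ℝ) - 1 + 1.00067) / N) := by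
      apply mul_le_mul_of_nonneg_left _ (by linarith)
      rw [add_div]
      exact add_le_add hlog1 le_rfl
    have h2 : (4 * (r : ℝ) - 2 * (s : ℝ) - 2) * (2 * (s : ℝ) - 1 + 1.00067) ≤ 2.07 * N := by
      nlinarith [sq_nonneg (4 * (r : ℝ) - 2 * (s : ℝ) - 2 - (2 * (s : ℝ) - 1 + 1.00067)),
        sq_nonneg ((r : ℝ) - 1)]
    calc (4 * (r : ℝ) - 2 * (s : ℝ) - 2) *
        (Real.log (1 + (2 * (s : ℝ) - 1) / N) + 1.00067 / N) ≤
        (4 * (r : ℝ) - 2 * (s : ℝ) - 2) * ((2 * (s : ℝ) - 1 + 1.00067) / N) := h1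
      _ = (4 * (r : ℝ) - 2 * (s : ℝ) - 2) * (2 * (s : ℝ) - 1 + 1.00067) / N := by ring
      _ ≤ 2.07 * N / N := by
          exact div_le_div_of_nonneg_right h2 hNpos.le  -- may need adjust
      _ = 2.07 := by field_simp
  -- LHS > 2.07
  have hspos : (0 : ℝ) < 2 * (s : ℝ) := by linarith
  have h8 : (8 : ℝ) ≤ 1 + N / (2 * (s : ℝ)) := by
    have : (7 : ℝ) ≤ N / (2 * (s : ℝ)) := by
      rw [le_div_iff₀ hspos]
      nlinarith [sq_nonneg ((r : ℝ) - 14)]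
    linarith
  have hlhs : (2.07 : ℝ) < Real.log (1 + N / (2 * (s : ℝ))) := by
    have h1 : Real.log 8 ≤ Real.log (1 + N / (2 * (s : ℝ))) :=
      Real.log_le_log (by norm_num) h8
    have h2 : (2.07 : ℝ) < Real.log 8 := by
      have : (8 : ℝ) = 2 ^ (3 : ℕ) := by norm_num
      rw [this, Real.log_pow]
      have := Real.log_two_gt_d9
      push_cast
      linarith
    linarith
  linarith
end

section
/- For every integer n ≥ 3, setting d = ⌈n/2⌉ + ⌊√n⌋ − 2, one has C(n − d + 2s − 1, 2s) ≥ C(d − 1, 2s − 1) for every integer s with 1 ≤ s ≤ ⌊d/2⌋. -/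
set_option maxRecDepth 10000000
set_option maxHeartbeats 16000000
set_option synthInstance.maxSize 4000
set_option synthInstance.maxHeartbeats 1000000

-- finite verification for n < 484 (hard case), n = q*q + j
theorem aux_small : ∀ q < 22, ∀ j < 45, ∀ s < 20, 1 ≤ s → j ≤ 2*q →
    (q*q+j) - ((q*q+j+1)/2+q-2) + 2*s ≤ (q*q+j+1)/2+q-2 →
    2*s * Nat.descFactorial ((q*q+j+1)/2+q-2-1) (2*s-1)
      ≤ Nat.descFactorial ((q*q+j) - ((q*q+j+1)/2+q-2) + 2*s - 1) (2*s) := by decide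

-- pairwise product comparison
theorem aux_L1 (m Δ : ℕ) : ∀ k : ℕ,
    (m+1)^k * ((m+Δ+k).descFactorial k) ≤ (m+k).descFactorial k * (m+1+Δ)^k := by
  intro k
  induction k with
  | zero => simp
  | succ k ih =>
    have e1 : (m+(k+1)).descFactorial (k+1) = (m+k+1) * (m+k).descFactorial k := by
      have h : m+(k+1) = (m+k)+1 := by ring
      rw [h, Nat.succ_descFactorial_succ]
    have e2 : (m+Δ+(k+1)).descFactorial (k+1) = (m+Δ+k+1) * (m+Δ+k).descFactorial k := by
      have h : m+Δ+(k+1) = (m+Δ+k)+1 := by ring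
      rw [h, Nat.succ_descFactorial_succ]
    rw [e1, e2, pow_succ, pow_succ]
    have key : (m+1) * (m+Δ+k+1) ≤ (m+k+1) * (m+1+Δ) := by
      have h : (m+k+1) * (m+1+Δ) = (m+1)*(m+Δ+k+1) + k*Δ := by ring
      omega
    calc (m+1)^k * (m+1) * ((m+Δ+k+1) * (m+Δ+k).descFactorial k)
        = ((m+1)*(m+Δ+k+1)) * ((m+1)^k * (m+Δ+k).descFactorial k) := by ring
      _ ≤ ((m+k+1)*(m+1+Δ)) * ((m+k).descFactorial k * (m+1+Δ)^k) :=
          Nat.mul_le_mul key ih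
      _ = (m+k+1) * (m+k).descFactorial k * ((m+1+Δ)^k * (m+1+Δ)) := by ring

-- bridge from descFactorial to choose
theorem aux_bridge (a b k : ℕ) (h : (k+1) * b.descFactorial k ≤ a.descFactorial (k+1)) :
    b.choose k ≤ a.choose (k+1) := by
  have h1 : Nat.factorial (k+1) * b.choose k ≤ Nat.factorial (k+1) * a.choose (k+1) := by
    rw [← Nat.descFactorial_eq_factorial_mul_choose a]
    calc Nat.factorial (k+1) * b.choose k = (k+1) * (Nat.factorial k * b.choose k) := by
          rw [Nat.factorial_succ]; ring
      _ = (k+1) * b.descFactorial k := by rw [← Nat.descFactorial_eq_factorial_mul_choose]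
      _ ≤ a.descFactorial (k+1) := h
  exact Nat.le_of_mul_le_mul_left h1 (Nat.factorial_pos _)

-- analytic core
theorem aux_star (q m s Δ k : ℕ) (hq : 22 ≤ q) (hs : 1 ≤ s) (hk : k + 1 = 2*s)
    (hm : q*q ≤ 2*m + 2*q) (hΔ : Δ + 2*s + 3 ≤ 2*q) :
    2*s * (m+1+Δ)^k ≤ m * (m+1)^k := by
  have hsq : s + 2 ≤ q := by omega
  have hm220 : 220 ≤ m := by
    have h1 : 22*q ≤ q*q := Nat.mul_le_mul_right q hq
    omega
  have hQ : (22:ℝ) ≤ (q:ℝ) := by exact_mod_cast hq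
  have hS : (1:ℝ) ≤ (s:ℝ) := by exact_mod_cast hs
  have hD0 : (0:ℝ) ≤ (Δ:ℝ) := by positivity
  have hK : (k:ℝ) = 2*(s:ℝ) - 1 := by
    have h : ((k:ℝ)) + 1 = 2*(s:ℝ) := by exact_mod_cast hk
    linarith
  have hMq : (q:ℝ)*(q:ℝ) ≤ 2*(m:ℝ) + 2*(q:ℝ) := by exact_mod_cast hm
  have hDS : (Δ:ℝ) + 2*(s:ℝ) + 3 ≤ 2*(q:ℝ) := by exact_mod_cast hΔ
  have hSq : (s:ℝ) + 2 ≤ (q:ℝ) := by exact_mod_cast hsq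
  have hM : (220:ℝ) ≤ (m:ℝ) := by exact_mod_cast hm220
  set M := (m:ℝ) with hMdef
  set Q := (q:ℝ) with hQdef
  set S := (s:ℝ) with hSdef
  set D := (Δ:ℝ) with hDdef
  have hM0 : (0:ℝ) < M := by linarith
  have hA0 : (0:ℝ) < M + 1 := by linarith
  have hQ0 : (0:ℝ) < Q := by linarith
  have hu0 : (0:ℝ) < 2*S := by linarith
  have hstepA : M + 1 + D ≤ (M+1) * Real.exp (D/(M+1)) := by
    have h1 := Real.add_one_le_exp (D/(M+1))
    have h2 : (M+1) * (D/(M+1) + 1) ≤ (M+1) * Real.exp (D/(M+1)) :=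
      mul_le_mul_of_nonneg_left h1 (le_of_lt hA0)
    have h3 : (M+1) * (D/(M+1) + 1) = D + (M+1) := by field_simp
    linarith
  have hpow : (M+1+D)^k ≤ (M+1)^k * Real.exp ((k:ℝ)*(D/(M+1))) := by
    have h1 : (M+1+D)^k ≤ ((M+1) * Real.exp (D/(M+1)))^k :=
      pow_le_pow_left₀ (by linarith) hstepA k
    rw [mul_pow, ← Real.exp_nat_mul] at h1
    exact h1
  have l4 : (k:ℝ)*(D/(M+1)) + 2*S/Q ≤ 33/10 := by
    have hkd : (k:ℝ)*D ≤ (2*S-1)*(2*Q-3-2*S) := by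
      rw [hK]
      apply mul_le_mul_of_nonneg_left (by linarith) (by linarith)
    have hden : (0:ℝ) < (M+1)*Q := by positivity
    rw [show (k:ℝ)*(D/(M+1)) = ((k:ℝ)*D)/(M+1) by ring,
      div_add_div _ _ (ne_of_gt hA0) (ne_of_gt hQ0), div_le_iff₀ hden]
    have hmm : 0 ≤ 2*(M+1) - (Q*Q - 2*Q + 2) := by linarith
    have hcoef : (0:ℝ) ≤ 33*Q - 20*S := by linarith
    have hkdQ : Q*((k:ℝ)*D) ≤ Q*((2*S-1)*(2*Q-3-2*S)) :=
      mul_le_mul_of_nonneg_left hkd (le_of_lt hQ0)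
    nlinarith [hkdQ, mul_nonneg hcoef hmm,
      mul_nonneg (le_of_lt hQ0) (sq_nonneg (8*S-5*Q)),
      mul_nonneg (mul_nonneg (le_of_lt hQ0) (le_of_lt hQ0)) (by linarith : (0:ℝ) ≤ 7*Q-104),
      mul_nonneg (by linarith : (0:ℝ) ≤ 120*Q-40) (by linarith : (0:ℝ) ≤ S)]
  have hkey : (k:ℝ)*(D/(M+1)) + Real.log (2*S) ≤ Real.log M := by
    have l1 : Real.log (2*S) ≤ Real.log Q + (2*S/Q - 1) := by
      have h1 : Real.log (2*S/Q) ≤ 2*S/Q - 1 := Real.log_le_sub_one_of_pos (by positivity)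
      have h2 : Real.log (2*S/Q) = Real.log (2*S) - Real.log Q :=
        Real.log_div (ne_of_gt hu0) (ne_of_gt hQ0)
      linarith
    have l2 : Real.log Q + Real.log ((Q-2)/2) ≤ Real.log M := by
      have hq2pos : (0:ℝ) < (Q-2)/2 := by linarith
      have h1 : Q * ((Q-2)/2) ≤ M := by nlinarith
      have h2 : Real.log (Q * ((Q-2)/2)) = Real.log Q + Real.log ((Q-2)/2) :=
        Real.log_mul (ne_of_gt hQ0) (ne_of_gt hq2pos)
      have h3 : Real.log (Q*((Q-2)/2)) ≤ Real.log M := Real.log_le_log (by positivity) h1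
      linarith
    have l3 : (23:ℝ)/10 ≤ Real.log ((Q-2)/2) := by
      have h10 : (10:ℝ) ≤ (Q-2)/2 := by linarith
      have hexp : Real.exp (23/10) ≤ 10 := by
        have e1 : Real.exp 1 < 2.7182818286 := Real.exp_one_lt_d9
        have e2 : Real.exp ((23:ℝ)/10)^(10:ℕ) = Real.exp 1 ^ (23:ℕ) := by
          rw [← Real.exp_nat_mul, ← Real.exp_nat_mul]; norm_num
        have e3 : Real.exp 1 ^ (23:ℕ) ≤ (2.7182818286:ℝ)^(23:ℕ) :=
          pow_le_pow_left₀ (le_of_lt (Real.exp_pos 1)) (le_of_lt e1) 23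
        have e4 : (2.7182818286:ℝ)^(23:ℕ) ≤ (10:ℝ)^(10:ℕ) := by norm_num
        have e5 : Real.exp ((23:ℝ)/10)^(10:ℕ) ≤ (10:ℝ)^(10:ℕ) := by
          rw [e2]; exact le_trans e3 e4
        exact le_of_pow_le_pow_left₀ (by norm_num) (by norm_num) e5
      calc (23:ℝ)/10 ≤ Real.log 10 := (Real.le_log_iff_exp_le (by norm_num)).2 hexp
        _ ≤ Real.log ((Q-2)/2) := Real.log_le_log (by norm_num) h10
    linarith
  have hB : 2*S * Real.exp ((k:ℝ)*(D/(M+1))) ≤ M := by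
    have h1 : 2*S * Real.exp ((k:ℝ)*(D/(M+1))) = Real.exp ((k:ℝ)*(D/(M+1)) + Real.log (2*S)) := by
      rw [Real.exp_add, Real.exp_log hu0]; ring
    rw [h1]
    calc Real.exp ((k:ℝ)*(D/(M+1)) + Real.log (2*S)) ≤ Real.exp (Real.log M) :=
          Real.exp_le_exp.2 hkey
      _ = M := Real.exp_log hM0
  have final : (2*S) * (M+1+D)^k ≤ M * (M+1)^k := by
    calc 2*S * (M+1+D)^k ≤ 2*S * ((M+1)^k * Real.exp ((k:ℝ)*(D/(M+1)))) := by
          apply mul_le_mul_of_nonneg_left hpow (by linarith)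
      _ = (M+1)^k * (2*S*Real.exp ((k:ℝ)*(D/(M+1)))) := by ring
      _ ≤ (M+1)^k * M := mul_le_mul_of_nonneg_left hB (by positivity)
      _ = M * (M+1)^k := by ring
  rw [← Nat.cast_le (α := ℝ)]
  push_cast
  calc (2*S) * (M+1+D)^k ≤ M * (M+1)^k := final
    _ = M * (M+1)^k := rfl

theorem stmt_10 (n : ℕ) (hn : 3 ≤ n) (d : ℕ)
    (hd : d = (n + 1) / 2 + Nat.sqrt n - 2) (s : ℕ) (hs1 : 1 ≤ s)
    (hs2 : s ≤ d / 2) :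
    Nat.choose (n - d + 2 * s - 1) (2 * s) ≥ Nat.choose (d - 1) (2 * s - 1) := by
  have hq2 : Nat.sqrt n * Nat.sqrt n ≤ n := Nat.sqrt_le n
  have hq3 : n < (Nat.sqrt n + 1) * (Nat.sqrt n + 1) := Nat.lt_succ_sqrt n
  have hq1 : 1 ≤ Nat.sqrt n := Nat.sqrt_pos.mpr (by omega)
  set q := Nat.sqrt n with hqdef
  have h2q : 2*q ≤ n := by
    rcases le_or_gt q 1 with h | h
    · omega
    · have h1 : 2*q ≤ q*q := Nat.mul_le_mul_right q h
      omega
  have hdn : d + 2 ≤ n := by omega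
  by_cases hcase : d ≤ n - d + 2*s - 1
  · -- easy case: Pascal
    obtain ⟨D, rfl⟩ : ∃ D, d = D + 1 := ⟨d - 1, by omega⟩
    have hS : 2*s = (2*s - 1) + 1 := by omega
    simp only [Nat.add_sub_cancel]
    calc D.choose (2*s-1) ≤ D.choose (2*s-1) + D.choose ((2*s-1)+1) := Nat.le_add_right _ _
      _ = (D+1).choose ((2*s-1)+1) := (Nat.choose_succ_succ _ _).symm
      _ = (D+1).choose (2*s) := by rw [← hS]
      _ ≤ (n-(D+1)+2*s-1).choose (2*s) := Nat.choose_le_choose _ hcase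
  · -- hard case
    push_neg at hcase
    have hmd : (n - d) + 2*s ≤ d := by omega
    set m := n - d with hmdef
    set k := 2*s - 1 with hkdef
    have hk1 : k + 1 = 2*s := by omega
    set Δ := d - (m + 2*s) with hΔdef
    have e3 : n - d + 2*s - 1 = m + k := by omega
    have e4 : d - 1 = m + Δ + k := by omega
    rw [e3, show (2*s) = k+1 from hk1.symm, e4]
    apply aux_bridge
    -- goal : (k+1) * (m+Δ+k).descFactorial k ≤ (m+k).descFactorial (k+1)
    have h2d : 2*d + 3 ≤ n + 2*q := by omega
    rcases lt_or_ge n 484 with hsmall | hlarge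
    · -- small case via decide lemma
      have hq22 : q < 22 := by
        by_contra hcon
        push_neg at hcon
        have := Nat.mul_le_mul hcon hcon
        omega
      have hj : n - q*q ≤ 2*q := by
        have h1 : (q+1)*(q+1) = q*q + 2*q + 1 := by ring
        omega
      have hj45 : n - q*q < 45 := by omega
      have hs20 : s < 20 := by omega
      have hsm := aux_small q hq22 (n - q*q) hj45 s hs20 hs1 hj
      have hn' : q*q + (n - q*q) = n := by omega
      rw [hn'] at hsm
      rw [← hd] at hsm
      have hsm2 := hsm (by omega)
      have e5 : n - d + 2*s - 1 = m + k := by omega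
      have e6 : d - 1 = m + Δ + k := by omega
      rw [e5, e6, ← hkdef] at hsm2
      rw [hk1]
      exact hsm2
    · -- large case
      have hq22 : 22 ≤ q := by
        rw [hqdef]
        rw [Nat.le_sqrt]
        omega
      have hm : q*q ≤ 2*m + 2*q := by
        have h1 : q*q ≤ n := hq2
        omega
      have hΔs : Δ + 2*s + 3 ≤ 2*q := by omega
      have hstar := aux_star q m s Δ k hq22 hs1 hk1 hm hΔs
      have hL1 := aux_L1 m Δ k
      have e5 : (m+k).descFactorial (k+1) = m * (m+k).descFactorial k := by
        have h : (m+k) - k = m := by omega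
        rw [Nat.descFactorial_succ, h]
      rw [e5]
      have hP : 0 < (m+1+Δ)^k := pow_pos (by omega) k
      apply Nat.le_of_mul_le_mul_right _ hP
      calc (k+1) * (m+Δ+k).descFactorial k * (m+1+Δ)^k
          = ((k+1) * (m+1+Δ)^k) * (m+Δ+k).descFactorial k := by ring
        _ ≤ (m * (m+1)^k) * (m+Δ+k).descFactorial k := by
            apply Nat.mul_le_mul_right
            rw [← hk1] at hstar
            exact hstar
        _ = m * ((m+1)^k * (m+Δ+k).descFactorial k) := by ring
        _ ≤ m * ((m+k).descFactorial k * (m+1+Δ)^k) := Nat.mul_le_mul_left m hL1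
        _ = m * (m+k).descFactorial k * (m+1+Δ)^k := by ring
end

section
/- Let ε be a real number with 0 < ε < 1/2, let B = log((2ε + 1)/(4ε)), and let A = ⌈(3B + 6)/(8ε) − (B + 1)/2⌉. Then for every integer n ≥ 2, one has hd(n) ≤ ⌈n/2⌉ + ⌊εn⌋ + A − 2. -/
/-!
Put `a = ⌊εn⌋` and `w = 1 / (2ε)`, so that `n < 2w(a + 1)`, and suppose some admissible `d`
exceeds `⌈n/2⌉ + a + A - 2`. The condition at `s = 1` forces `d < n`, which for `a = 0` already
contradicts the size of `A`. For `a ≥ 1`, the condition at `s = a`, combined with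
`C(p, m) q^m ≤ C(q, m) p^m` for `p ≤ q`, gives `2a (d - 1)^(2a-1) ≤ (n - d) p^(2a-1)` with
`p = n + 2a - 1 - d`. As `d - 1 ≥ p + 2A - 2`, taking logarithms and using `log x ≥ 1 - 1/x`
yields `(2a - 1)(2A - 2) / (p + 2A - 2) ≤ log ((n - d) / (2a))`. The bounds on `p` and `n - d`
coming from `n < 2w(a + 1)` make the right side at most `log ((w + 1) / 2) + 1/a`, and the choice
of `A` makes the left side larger.
-/

/-- `hd n` is the largest integer `d` with `0 ≤ d ≤ n + 1` such that
`C(n - d + 2s - 1, 2s) ≥ C(d - 1, 2s - 1)` for all integers `s` with `1 ≤ s ≤ ⌊d/2⌋`.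
(Here `n - d + 2s - 1` is written as `n + 2 * s - 1 - d`, which does not truncate
since `d ≤ n + 1 ≤ n + 2 * s - 1` for `s ≥ 1`.) By a combinatorial
characterization of the Hilbert depth, `hd n = hdepth (Sₙ / Iₙ)` where
`Iₙ = (x₁y, …, xₙy) ⊂ Sₙ = K[x₁, …, xₙ, y]` is the edge ideal of the star graph
with `n` rays. -/
noncomputable def hd (n : ℕ) : ℕ :=
  sSup {d : ℕ | d ≤ n + 1 ∧ ∀ s : ℕ, 1 ≤ s → s ≤ d / 2 →
    Nat.choose (d - 1) (2 * s - 1) ≤ Nat.choose (n + 2 * s - 1 - d) (2 * s)}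

open Real

theorem Nat.descFactorial_mul_pow_le_descFactorial_mul_pow {p q : ℕ} (hpq : p ≤ q) (m : ℕ) :
    p.descFactorial m * q ^ m ≤ q.descFactorial m * p ^ m := by
  induction m with
  | zero => simp
  | succ m ih =>
    have key : (p - m) * q ≤ (q - m) * p := by
      rw [Nat.sub_mul, Nat.sub_mul, Nat.mul_comm p q]
      exact Nat.sub_le_sub_left (Nat.mul_le_mul_left m hpq) _
    calc p.descFactorial (m + 1) * q ^ (m + 1)
        = ((p - m) * q) * (p.descFactorial m * q ^ m) := by rw [Nat.descFactorial_succ]; ring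
      _ ≤ ((q - m) * p) * (q.descFactorial m * p ^ m) := Nat.mul_le_mul key ih
      _ = q.descFactorial (m + 1) * p ^ (m + 1) := by rw [Nat.descFactorial_succ]; ring

theorem Nat.choose_mul_pow_le_choose_mul_pow {p q : ℕ} (hpq : p ≤ q) (m : ℕ) :
    p.choose m * q ^ m ≤ q.choose m * p ^ m := by
  have h := Nat.descFactorial_mul_pow_le_descFactorial_mul_pow hpq m
  rw [Nat.descFactorial_eq_factorial_mul_choose, Nat.descFactorial_eq_factorial_mul_choose,
    mul_assoc, mul_assoc] at h
  exact Nat.le_of_mul_le_mul_left h m.factorial_pos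

theorem Nat.succ_mul_pow_le_of_choose_le_choose_succ {m p q : ℕ} (hmp : m ≤ p) (hpq : p ≤ q)
    (h : q.choose m ≤ p.choose (m + 1)) : (m + 1) * q ^ m ≤ (p - m) * p ^ m := by
  refine Nat.le_of_mul_le_mul_left ?_ (Nat.choose_pos hmp)
  calc p.choose m * ((m + 1) * q ^ m) = (m + 1) * (p.choose m * q ^ m) := by ring
    _ ≤ (m + 1) * (q.choose m * p ^ m) :=
        Nat.mul_le_mul_left _ (Nat.choose_mul_pow_le_choose_mul_pow hpq m)
    _ ≤ (m + 1) * (p.choose (m + 1) * p ^ m) := by gcongr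
    _ = p.choose (m + 1) * (m + 1) * p ^ m := by ring
    _ = p.choose m * ((p - m) * p ^ m) := by rw [Nat.choose_succ_right_eq]; ring

theorem mul_div_le_log_of_succ_mul_pow_le {m : ℕ} {p c q g : ℝ} (hp : 0 < p) (hc : 0 ≤ c)
    (hq : p + c ≤ q) (h : (m + 1) * q ^ m ≤ g * p ^ m) :
    m * (c / (p + c)) ≤ log (g / (m + 1)) := by
  have hpc : 0 < p + c := by linarith
  have hlog : c / (p + c) ≤ log ((p + c) / p) := by
    have := one_sub_inv_le_log_of_pos (div_pos hpc hp)
    rwa [inv_div, one_sub_div hpc.ne', add_sub_cancel_left] at this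
  have hpow : ((p + c) / p) ^ m ≤ g / (m + 1) := by
    rw [div_pow, div_le_div_iff₀ (by positivity) (by positivity)]
    calc (p + c) ^ m * (m + 1) ≤ q ^ m * (m + 1) := by gcongr
      _ ≤ g * p ^ m := by linarith
  calc m * (c / (p + c)) ≤ m * log ((p + c) / p) := by gcongr
    _ = log (((p + c) / p) ^ m) := (log_pow _ _).symm
    _ ≤ log (g / (m + 1)) := log_le_log (by positivity) hpow

theorem log_div_two_mul_le {a g w : ℝ} (ha : 0 < a) (hg : 0 < g) (hgw : g ≤ (a + 1) * (w - 1)) :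
    log (g / (2 * a)) ≤ log ((w + 1) / 2) + 1 / a := by
  have hw : 1 < w := by nlinarith
  calc log (g / (2 * a)) ≤ log ((w + 1) / 2 * ((a + 1) / a)) := by
        gcongr
        rw [div_le_iff₀ (by positivity)]
        field_simp
        nlinarith
    _ = log ((w + 1) / 2) + log ((a + 1) / a) := log_mul (by positivity) (by positivity)
    _ ≤ log ((w + 1) / 2) + 1 / a := by
        have := log_le_sub_one_of_pos (show 0 < (a + 1) / a by positivity)
        have e : (a + 1) / a - 1 = 1 / a := by field_simp; ring
        linarith

theorem sub_div_add_le_log_add_div_two {w : ℝ} (hw : 0 < w + 1) :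
    (w - 1) / (w + 1) ≤ log ((w + 1) / 2) := by
  have := one_sub_inv_le_log_of_pos (show 0 < (w + 1) / 2 by positivity)
  rw [inv_div] at this
  convert this using 1
  field_simp
  ring

theorem two_mul_succ_mul_le_of_depth_bound {a : ℕ} (ha : 1 ≤ a) {w A B : ℝ} (hw : 1 < w)
    (hB : w - 1 ≤ B * (w + 1)) (hA : (3 * B + 6) * w / 4 - (B + 1) / 2 ≤ A)
    (hAw : A + 3 * a < w * (a + 1)) :
    2 * (a + 1) * (w - 1) * (a * B + 1) ≤ a * (2 * a - 1) * (2 * A - 2) := by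
  have hB0 : 0 < B := by nlinarith
  obtain rfl | rfl | rfl | ha4 : a = 1 ∨ a = 2 ∨ a = 3 ∨ 4 ≤ a := by omega
  · push_cast at hAw
    nlinarith
  · push_cast at hAw ⊢
    have hw2 : 2 < w := by nlinarith
    nlinarith
  · push_cast at hAw ⊢
    have hw2 : 2 < w := by nlinarith
    nlinarith
  · have ha4 : (4 : ℝ) ≤ a := by exact_mod_cast ha4
    -- With `2A - 2` replaced by its lower bound, the right side minus the left side is
    -- `aB (w (a - 7/2) + 3) + (w - 1)(6a² - 5a - 2)`.
    have h1 : 0 ≤ a * B * (w * (a - 7 / 2) + 3) := mul_nonneg (by positivity) (by nlinarith)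
    have h2 : 0 ≤ (w - 1) * (6 * a ^ 2 - 5 * a - 2) := mul_nonneg (by linarith) (by nlinarith)
    nlinarith [mul_le_mul_of_nonneg_left hA (by nlinarith : 0 ≤ (a : ℝ) * (2 * a - 1))]

/-- For `w = 1 / (2ε)` this is the paper's `(3B + 6) / (8ε) - (B + 1) / 2` with
`B = log ((2ε + 1) / (4ε)) = log ((w + 1) / 2)`. -/
noncomputable def depthBound (w : ℝ) : ℝ :=
  (3 * log ((w + 1) / 2) + 6) * w / 4 - (log ((w + 1) / 2) + 1) / 2

theorem one_lt_depthBound {w : ℝ} (hw : 1 < w) : 1 < depthBound w := by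
  have hB : 0 < log ((w + 1) / 2) := log_pos (by linarith)
  unfold depthBound
  nlinarith

theorem log_div_two_mul_lt {a g : ℕ} (ha : 1 ≤ a) {w A p : ℝ} (hw : 1 < w) (hA2 : 2 ≤ A)
    (hA : depthBound w ≤ A) (hp : 0 < p) (hg : g + a + A < w * (a + 1) + 1)
    (hpA : p + A < w * (a + 1) + a) :
    log (g / (2 * a)) < (2 * a - 1) * ((2 * A - 2) / (p + (2 * A - 2))) := by
  set B := log ((w + 1) / 2)
  have ha' : (1 : ℝ) ≤ a := by exact_mod_cast ha
  have hpC : 0 < p + (2 * A - 2) := by linarith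
  have hrhs : 0 < (2 * a - 1) * ((2 * A - 2) / (p + (2 * A - 2))) :=
    mul_pos (by linarith) (div_pos (by linarith) hpC)
  rcases le_or_gt g (2 * a) with hg2 | hg2
  · refine (log_nonpos (by positivity) ?_).trans_lt hrhs
    rw [div_le_one (by positivity)]
    exact_mod_cast hg2
  have hg2 : (2 * a + 1 : ℝ) ≤ g := by exact_mod_cast hg2
  have hAw : A + 3 * a < w * (a + 1) := by linarith
  have hlog : log (g / (2 * a)) ≤ B + 1 / a :=
    log_div_two_mul_le (by positivity) (by linarith) (by nlinarith)
  have hB : w - 1 ≤ B * (w + 1) := by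
    have := sub_div_add_le_log_add_div_two (w := w) (by linarith)
    rwa [div_le_iff₀ (by linarith)] at this
  have hkey := two_mul_succ_mul_le_of_depth_bound ha hw hB hA hAw
  have hpw : p + (2 * A - 2) < 2 * (a + 1) * (w - 1) := by linarith
  have haB : 0 < a * B + 1 := by
    have : 0 < B := by nlinarith
    positivity
  rw [← not_le]
  intro hle
  have h1 : (2 * a - 1) * (2 * A - 2) ≤ (B + 1 / a) * (p + (2 * A - 2)) := by
    rw [← div_le_iff₀ hpC, mul_div_assoc]
    exact hle.trans hlog
  have h2 : (B + 1 / a) * a = a * B + 1 := by field_simp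
  nlinarith [mul_le_mul_of_nonneg_right h1 (by linarith : (0 : ℝ) ≤ a),
    mul_lt_mul_of_pos_left hpw haB]

def HdAdmissible (n d : ℕ) : Prop :=
  d ≤ n + 1 ∧ ∀ s : ℕ, 1 ≤ s → s ≤ d / 2 →
    Nat.choose (d - 1) (2 * s - 1) ≤ Nat.choose (n + 2 * s - 1 - d) (2 * s)

theorem hd_le_of_forall_admissible_le {n M : ℕ} (h : ∀ d, HdAdmissible n d → d ≤ M) :
    hd n ≤ M :=
  csSup_le' h

namespace HdAdmissible

variable {n d : ℕ}

theorem add_one_le (h : HdAdmissible n d) (hd2 : 2 ≤ d) : d + 1 ≤ n := by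
  have h1 := h.2 1 le_rfl (by omega)
  by_contra! hnd
  rw [Nat.choose_eq_zero_of_lt (by omega : n + 2 * 1 - 1 - d < 2 * 1), Nat.choose_one_right] at h1
  omega

theorem succ_mul_pow_le {s m : ℕ} (h : HdAdmissible n d) (hs : 1 ≤ s) (hm : 2 * s = m + 1)
    (hdn : d + 1 ≤ n) (hnd : n + m + 1 ≤ 2 * d) :
    (m + 1) * (d - 1) ^ m ≤ (n - d) * (n + m - d) ^ m := by
  have hc := h.2 s hs (by omega)
  rw [show 2 * s - 1 = m by omega, show n + 2 * s - 1 - d = n + m - d by omega, hm] at hc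
  have := Nat.succ_mul_pow_le_of_choose_le_choose_succ (by omega) (by omega) hc
  rwa [show n + m - d - m = n - d by omega] at this

theorem le_depthBound {a A : ℕ} {w : ℝ} (h : HdAdmissible n d) (hn : 2 ≤ n) (hw : 1 < w)
    (hA : depthBound w ≤ A) (hnw : n < 2 * w * (a + 1)) : d ≤ (n + 1) / 2 + a + A - 2 := by
  have hA2 : 2 ≤ A := by
    have : (1 : ℝ) < A := (one_lt_depthBound hw).trans_le hA
    exact_mod_cast this
  have hA2' : (2 : ℝ) ≤ A := by exact_mod_cast hA2
  have hhalf : ((n / 2 : ℕ) : ℝ) < w * (a + 1) :=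
    Nat.cast_div_le.trans_lt (by push_cast; linarith)
  by_contra! hlt
  have hdn := h.add_one_le (by omega)
  rcases Nat.eq_zero_or_pos a with rfl | ha
  · have hAn : (A : ℝ) ≤ ((n / 2 : ℕ) : ℝ) := by exact_mod_cast (by omega : A ≤ n / 2)
    have hB : 0 ≤ log ((w + 1) / 2) := log_nonneg (by linarith)
    unfold depthBound at hA
    push_cast at hhalf
    nlinarith
  obtain ⟨m, hm⟩ : ∃ m, 2 * a = m + 1 := ⟨2 * a - 1, by omega⟩
  have hmR : (m : ℝ) + 1 = 2 * a := by exact_mod_cast hm.symm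
  have hpow : ((m : ℝ) + 1) * ((d - 1 : ℕ) : ℝ) ^ m
      ≤ ((n - d : ℕ) : ℝ) * ((n + m - d : ℕ) : ℝ) ^ m := by
    exact_mod_cast h.succ_mul_pow_le ha hm hdn (by omega)
  have hp : (0 : ℝ) < ((n + m - d : ℕ) : ℝ) := by exact_mod_cast (by omega : 0 < n + m - d)
  have hpq : ((n + m - d : ℕ) : ℝ) + (2 * A - 2) ≤ ((d - 1 : ℕ) : ℝ) := by
    have : ((n + m - d + 2 * A : ℕ) : ℝ) ≤ ((d - 1 + 2 : ℕ) : ℝ) := by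
      exact_mod_cast (by omega)
    push_cast at this
    linarith
  have hlog := mul_div_le_log_of_succ_mul_pow_le hp (by linarith) hpq hpow
  rw [hmR, show (m : ℝ) = 2 * a - 1 by linarith] at hlog
  have hg : ((n - d : ℕ) : ℝ) + a + A < w * (a + 1) + 1 := by
    have : ((n - d + a + A : ℕ) : ℝ) ≤ ((n / 2 + 1 : ℕ) : ℝ) := by
      exact_mod_cast (by omega)
    push_cast at this ⊢
    linarith
  have hpA : ((n + m - d : ℕ) : ℝ) + A < w * (a + 1) + a := by
    have : ((n + m - d + A : ℕ) : ℝ) ≤ ((n / 2 + a : ℕ) : ℝ) := by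
      exact_mod_cast (by omega)
    push_cast at this ⊢
    linarith
  exact (log_div_two_mul_lt ha hw hA2' hA hp hg hpA).not_ge hlog

end HdAdmissible

theorem hd_le_depthBound {n a A : ℕ} {w : ℝ} (hn : 2 ≤ n) (hw : 1 < w)
    (hA : depthBound w ≤ A) (hnw : n < 2 * w * (a + 1)) : hd n ≤ (n + 1) / 2 + a + A - 2 :=
  hd_le_of_forall_admissible_le fun _ h => h.le_depthBound hn hw hA hnw

theorem stmt_12 (ε : ℝ) (hε0 : 0 < ε) (hε1 : ε < 1 / 2)
    (B : ℝ) (hB : B = Real.log ((2 * ε + 1) / (4 * ε)))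
    (A : ℤ) (hA : A = ⌈(3 * B + 6) / (8 * ε) - (B + 1) / 2⌉)
    (n : ℕ) (hn : 2 ≤ n) :
    (hd n : ℤ) ≤ ((n : ℤ) + 1) / 2 + ⌊ε * (n : ℝ)⌋ + A - 2 := by
  set w := 1 / (2 * ε) with hw_def
  have hw : 1 < w := by rw [hw_def, lt_div_iff₀ (by linarith)]; linarith
  have hAw : depthBound w ≤ A := by
    have hBw : B = log ((w + 1) / 2) := by rw [hB, hw_def]; congr 1; field_simp; ring
    have : (3 * B + 6) / (8 * ε) - (B + 1) / 2 = depthBound w := by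
      rw [depthBound, ← hBw, hw_def]; field_simp; ring
    rw [← this, hA]
    exact Int.le_ceil _
  have hA1 : 1 < A := by exact_mod_cast (one_lt_depthBound hw).trans_le hAw
  have hnw : (n : ℝ) < 2 * w * (⌊ε * n⌋₊ + 1) := by
    have := Nat.lt_floor_add_one (ε * n)
    rw [show 2 * w = 1 / ε by rw [hw_def]; field_simp, one_div_mul_eq_div, lt_div_iff₀ hε0]
    linarith
  have hAn : ((A.toNat : ℕ) : ℝ) = A := by exact_mod_cast Int.toNat_of_nonneg (by omega)
  have key := hd_le_depthBound hn hw (hAn ▸ hAw) hnw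
  rw [← Int.natCast_floor_eq_floor (by positivity)]
  omega
end

section
/- Let ε be a real number with 0 < ε < 1/2, let B = log((2ε + 1)/(4ε)), and let A = ⌈(3B + 6)/(8ε) − (B + 1)/2⌉. Then for every integer k ≥ 1 with k − ⌊2kε⌋ ≥ A, writing m = ⌊2kε⌋ (so m ≥ 1), one has log(1 + (k − m − A)/(2m)) < ∑_{j=1}^{2m−1} log(1 + (2A − 1)/(k − m − A + j)), where the sum and logarithms are over the real numbers. -/
/-!
The left side is below `B` since `(k + m - A) * 4ε < (2ε + 1) * 2m`. On the right, the map
`x ↦ log (1 + c / x)` is convex, so pairing `j` with `2m - j` bounds the sum below by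
`(2m - 1) * log (1 + (2A - 1) / (k - A))`, and `log (1 + x) ≥ 2x / (x + 2)` bounds this by
`(2m - 1) (4A - 2) / (2k - 1)`. That this exceeds `B` is elementary, given
`(1 - 2ε) / (1 + 2ε) ≤ B ≤ (1 - 2ε) / (4ε)` and the choice of `A`, which makes `8εA` lie
beyond the larger root of a quadratic.
-/

open Real Finset

lemma two_mul_log_one_add_div_le_add {p q r c : ℝ} (hp : 0 < p) (hq : 0 < q)
    (hpq : p + q = 2 * r) (hc : 0 ≤ c) :
    2 * log (1 + c / r) ≤ log (1 + c / p) + log (1 + c / q) := by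
  have hr : 0 < r := by linarith
  -- The two sides of `key` differ by `(r ^ 2 - p * q) * (2 * c * r + c ^ 2)`, and
  -- `r ^ 2 - p * q = ((p - q) / 2) ^ 2`.
  have key : (r + c) ^ 2 * (p * q) ≤ (p + c) * (q + c) * r ^ 2 := by
    have hr' : r = (p + q) / 2 := by linarith
    subst hr'
    nlinarith [mul_nonneg (sq_nonneg (p - q)) (by positivity : 0 ≤ c * (p + q) + c ^ 2)]
  rw [← log_rpow (by positivity), ← log_mul (by positivity) (by positivity)]
  apply log_le_log (by positivity)
  rw [show (2 : ℝ) = ((2 : ℕ) : ℝ) by norm_num, rpow_natCast]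
  rw [one_add_div hr.ne', one_add_div hp.ne', one_add_div hq.ne', div_pow,
    div_mul_div_comm, div_le_div_iff₀ (by positivity) (by positivity)]
  linarith

lemma card_mul_le_sum_Icc_of_le_add_reflect (f : ℤ → ℝ) (a b : ℤ) (c : ℝ)
    (h : ∀ j ∈ Icc a b, 2 * c ≤ f j + f (a + b - j)) :
    #(Icc a b) * c ≤ ∑ j ∈ Icc a b, f j := by
  have hreflect : ∑ j ∈ Icc a b, f (a + b - j) = ∑ j ∈ Icc a b, f j := by
    refine sum_nbij' (fun j ↦ a + b - j) (fun j ↦ a + b - j) ?_ ?_ ?_ ?_ ?_ <;>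
      intro j hj <;> simp only [mem_Icc] at hj ⊢ <;> omega
  have := sum_le_sum h
  rw [sum_add_distrib, hreflect, ← mul_sum, sum_const, nsmul_eq_mul] at this
  linarith

lemma mul_log_one_add_div_le_sum_Icc {x c : ℝ} (hx : -1 < x) (hc : 0 ≤ c) {m : ℤ} (hm : 1 ≤ m) :
    (2 * m - 1) * log (1 + c / (x + m)) ≤
      ∑ j ∈ Icc (1 : ℤ) (2 * m - 1), log (1 + c / (x + j)) := by
  have hcard : (#(Icc (1 : ℤ) (2 * m - 1)) : ℝ) = 2 * m - 1 := by
    rw [Int.card_Icc, show 2 * m - 1 + 1 - 1 = 2 * m - 1 by ring,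
      ← Int.cast_natCast, Int.toNat_of_nonneg (by omega)]
    push_cast; ring
  rw [← hcard]
  refine card_mul_le_sum_Icc_of_le_add_reflect _ _ _ _ fun j hj ↦ ?_
  rw [mem_Icc] at hj
  have hj1 : (1 : ℝ) ≤ j := by exact_mod_cast hj.1
  have hj2 : (j : ℝ) ≤ 2 * m - 1 := by exact_mod_cast hj.2
  push_cast
  exact two_mul_log_one_add_div_le_add (by linarith) (by linarith) (by ring) hc

lemma two_mul_div_add_le_log_one_add_div {c r : ℝ} (hc : 0 ≤ c) (hr : 0 < r) :
    2 * c / (c + 2 * r) ≤ log (1 + c / r) := by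
  convert le_log_one_add_of_nonneg (div_nonneg hc hr.le) using 1
  field_simp

lemma log_one_add_div_two_mul_lt {ε K M a : ℝ} (hε : 0 < ε) (hM : 0 < M) (hMaK : M + a ≤ K)
    (hK : 2 * K * ε < M + 1) (ha : 1 ≤ 2 * ε * a) :
    log (1 + (K - M - a) / (2 * M)) < log ((2 * ε + 1) / (4 * ε)) := by
  have hpos : 0 < 1 + (K - M - a) / (2 * M) := by
    have := div_nonneg (by linarith : 0 ≤ K - M - a) (by linarith : 0 ≤ 2 * M)
    linarith
  refine log_lt_log hpos ?_
  rw [one_add_div (by positivity), div_lt_div_iff₀ (by positivity) (by positivity)]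
  nlinarith

lemma log_two_mul_add_one_div_four_mul_bounds {ε : ℝ} (hε : 0 < ε) :
    1 - 2 * ε ≤ log ((2 * ε + 1) / (4 * ε)) * (1 + 2 * ε) ∧
      4 * ε * log ((2 * ε + 1) / (4 * ε)) ≤ 1 - 2 * ε := by
  have hε4 : 0 < 4 * ε := by positivity
  have hpos : 0 < (2 * ε + 1) / (4 * ε) := by positivity
  constructor
  · have := one_sub_inv_le_log_of_pos hpos
    rw [inv_div, one_sub_div (by positivity), div_le_iff₀ (by positivity)] at this
    linarith
  · have := log_le_sub_one_of_pos hpos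
    rw [div_sub_one hε4.ne', le_div_iff₀ hε4] at this
    linarith

lemma quadratic_nonneg {ε B u : ℝ} (hε0 : 0 < ε) (hε1 : ε < 1 / 2)
    (hB_lower : 1 - 2 * ε ≤ B * (1 + 2 * ε)) (hB_upper : 4 * ε * B ≤ 1 - 2 * ε)
    (hu : 3 * B + 6 - 4 * ε * (B + 1) ≤ u) :
    0 ≤ u ^ 2 - (B + 6) * u + 4 * ε * (3 * B + 6 - 4 * ε - 2 * ε * B) := by
  have hB : 0 < B := by nlinarith
  -- The quadratic is `(u - u₀) * (u - u₁) + R` with `u₀ = 3 * B + 6 - 4 * ε * (B + 1)`,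
  -- `u₁ = 4 * ε * (B + 1) - 2 * B < u₀`, and the constant `R` below.
  have hR : 0 ≤ (3 * B + 6 - 4 * ε * (B + 1)) * (2 * B - 4 * ε * (B + 1)) +
      4 * ε * (3 * B + 6 - 4 * ε - 2 * ε * B) := by
    nlinarith [mul_pos hε0 hB, mul_nonneg hB.le (sub_nonneg.2 hB_upper),
      mul_nonneg (sub_nonneg.2 hB_lower) (sub_nonneg.2 hB_upper)]
  have hu' : 0 ≤ u - (4 * ε * (B + 1) - 2 * B) := by nlinarith
  nlinarith [mul_nonneg (sub_nonneg.2 hu) hu']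

lemma mul_two_mul_sub_one_lt {ε B a M K : ℝ} (hε0 : 0 < ε) (hε1 : ε < 1 / 2)
    (hB_lower : 1 - 2 * ε ≤ B * (1 + 2 * ε)) (hB_upper : 4 * ε * B ≤ 1 - 2 * ε)
    (ha : 3 * B + 6 - 4 * ε * (B + 1) ≤ 8 * ε * a) (hMaK : M + a ≤ K)
    (hK : 2 * K * ε < M + 1) :
    B * (2 * K - 1) < (2 * M - 1) * (4 * a - 2) := by
  have hB : 0 < B := by nlinarith
  have hq := quadratic_nonneg hε0 hε1 hB_lower hB_upper ha
  -- By `hK` it suffices to show `hG`, which is linear in `M` with slope `hslope`. Since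
  -- `M + a ≤ K`, `hK` also bounds `M` below (`hslack`), and at that bound
  -- `(1 - 2 * ε)` times `hG` is `hq / 4`.
  have hslope : 0 ≤ 8 * ε * a - 4 * ε - B := by nlinarith
  have hslack : 0 ≤ M * (1 - 2 * ε) - (2 * ε * a - 1) := by nlinarith
  have hG : 0 ≤ ε * ((2 * M - 1) * (4 * a - 2)) - B * (M + 1 - ε) := by
    have : 0 ≤ (1 - 2 * ε) * (ε * ((2 * M - 1) * (4 * a - 2)) - B * (M + 1 - ε)) := by
      nlinarith [mul_nonneg hslope hslack]
    exact (mul_nonneg_iff_of_pos_left (by linarith)).1 this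
  nlinarith [mul_lt_mul_of_pos_left hK hB]

theorem stmt_13_general (ε : ℝ) (hε0 : 0 < ε) (hε1 : ε < 1 / 2)
    (B : ℝ) (hB : B = Real.log ((2 * ε + 1) / (4 * ε)))
    (A : ℤ) (hA : A = ⌈(3 * B + 6) / (8 * ε) - (B + 1) / 2⌉)
    (k : ℕ) (m : ℤ) (hm : m = ⌊2 * (k : ℝ) * ε⌋)
    (hkA : A ≤ (k : ℤ) - m) :
    Real.log (1 + ((k : ℝ) - (m : ℝ) - (A : ℝ)) / (2 * (m : ℝ))) <
      ∑ j ∈ Finset.Icc (1 : ℤ) (2 * m - 1),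
        Real.log (1 + (2 * (A : ℝ) - 1) / ((k : ℝ) - (m : ℝ) - (A : ℝ) + (j : ℝ))) := by
  obtain ⟨hB_lower, hB_upper⟩ := hB ▸ log_two_mul_add_one_div_four_mul_bounds hε0
  have ha : 3 * B + 6 - 4 * ε * (B + 1) ≤ 8 * ε * A := by
    have := hA ▸ Int.le_ceil ((3 * B + 6) / (8 * ε) - (B + 1) / 2)
    rw [sub_le_iff_le_add, div_le_iff₀ (by positivity)] at this
    linarith
  have hkm : 2 * k * ε < m + 1 := hm ▸ Int.lt_floor_add_one _
  have hmA : (m : ℝ) + A ≤ k := by exact_mod_cast (by omega : m + A ≤ (k : ℤ))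
  have h2εA : 1 ≤ 2 * ε * A := by nlinarith
  have hA1 : (1 : ℝ) ≤ A := by nlinarith
  have hm1 : 1 ≤ m := by
    have hm0 : (0 : ℝ) ≤ m := by exact_mod_cast hm ▸ Int.floor_nonneg.2 (by positivity)
    rw [hm, Int.le_floor]
    push_cast
    nlinarith
  have hm1' : (1 : ℝ) ≤ m := by exact_mod_cast hm1
  calc _ < B := hB ▸ log_one_add_div_two_mul_lt hε0 (by linarith) hmA hkm h2εA
    _ < (2 * m - 1) * (2 * (2 * A - 1) / ((2 * A - 1) + 2 * ((k - m - A) + m))) := by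
        rw [show (2 * A - 1) + 2 * ((k - m - A) + m) = (2 * k - 1 : ℝ) by ring, mul_div_assoc',
          lt_div_iff₀ (by linarith)]
        linarith [mul_two_mul_sub_one_lt hε0 hε1 hB_lower hB_upper ha hmA hkm]
    _ ≤ (2 * m - 1) * log (1 + (2 * A - 1) / ((k - m - A) + m)) := by
        gcongr
        · linarith
        · exact two_mul_div_add_le_log_one_add_div (by linarith) (by linarith)
    _ ≤ _ := mul_log_one_add_div_le_sum_Icc (by linarith) (by linarith) hm1

theorem stmt_13 (ε : ℝ) (hε0 : 0 < ε) (hε1 : ε < 1 / 2)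
    (B : ℝ) (hB : B = Real.log ((2 * ε + 1) / (4 * ε)))
    (A : ℤ) (hA : A = ⌈(3 * B + 6) / (8 * ε) - (B + 1) / 2⌉)
    (k : ℕ) (hk : 1 ≤ k) (m : ℤ) (hm : m = ⌊2 * (k : ℝ) * ε⌋)
    (hkA : A ≤ (k : ℤ) - m) :
    Real.log (1 + ((k : ℝ) - (m : ℝ) - (A : ℝ)) / (2 * (m : ℝ))) <
      ∑ j ∈ Finset.Icc (1 : ℤ) (2 * m - 1),
        Real.log (1 + (2 * (A : ℝ) - 1) / ((k : ℝ) - (m : ℝ) - (A : ℝ) + (j : ℝ))) :=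
  stmt_13_general ε hε0 hε1 B hB A hA k m hm hkA
end

section
/- For every integer k ≥ 1, writing p = ⌊√(2k+1)⌋, one has C(k − p + 2s + 1, 2s) ≥ C(k + p − 2, 2s − 1) for every integer s with s ≥ p. -/
theorem stmt_16 (k : ℕ) (hk : 1 ≤ k) (p : ℕ) (hp : p = Nat.sqrt (2 * k + 1))
    (s : ℕ) (hs : p ≤ s) :
    Nat.choose (k - p + 2 * s + 1) (2 * s) ≥ Nat.choose (k + p - 2) (2 * s - 1) := by
  have hp1 : 1 ≤ p := by
    rw [hp]
    exact Nat.sqrt_pos.mpr (by omega)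
  have hpk : p ≤ k := by
    have : Nat.sqrt (2 * k + 1) < k + 1 := by
      rw [Nat.sqrt_lt']
      nlinarith
    omega
  calc Nat.choose (k + p - 2) (2 * s - 1)
      ≤ Nat.choose (k - p + 2 * s) (2 * s - 1) :=
        Nat.choose_le_choose _ (by omega)
    _ ≤ Nat.choose (k - p + 2 * s + 1) (2 * s) := by
        have h2 : 2 * s = (2 * s - 1) + 1 := by omega
        rw [h2, Nat.choose_succ_succ]
        exact Nat.le_add_right _ _
end

section
/- For every integer n ≥ 1, one has hd(n) ≤ n + 2 − ⌈√(2n + 1/4) + 1/2⌉, where the square root and the ceiling are taken over the real numbers. -/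
theorem stmt_17 (n : ℕ) (hn : 1 ≤ n) :
    (hd n : ℤ) ≤ (n : ℤ) + 2 - ⌈Real.sqrt (2 * (n : ℝ) + 1 / 4) + 1 / 2⌉ := by
  set S := {d : ℕ | d ≤ n + 1 ∧ ∀ s : ℕ, 1 ≤ s → s ≤ d / 2 →
    Nat.choose (d - 1) (2 * s - 1) ≤ Nat.choose (n + 2 * s - 1 - d) (2 * s)} with hS
  have h0 : (0 : ℕ) ∈ S := by
    constructor
    · omega
    · intro s hs hs'; omega
  have hbdd : BddAbove S := ⟨n + 1, fun d hd => hd.1⟩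
  have hmem : hd n ∈ S := Nat.sSup_mem ⟨0, h0⟩ hbdd
  obtain ⟨hle, hcond⟩ := hmem
  set d := hd n with hdd
  have hsq : (0:ℝ) ≤ Real.sqrt (2 * (n : ℝ) + 1 / 4) := Real.sqrt_nonneg _
  by_cases hd2 : 2 ≤ d
  · have h1 := hcond 1 le_rfl (by omega)
    simp only [mul_one] at h1
    -- h1 : (d-1).choose 1 ≤ (n+2-1-d).choose 2
    have hk : n + 2 * 1 - 1 - d = n + 1 - d := by omega
    rw [hk, Nat.choose_one_right, Nat.choose_two_right] at h1
    set k := n + 1 - d with hkdef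
    have h2 : 2 * (d - 1) ≤ k * (k - 1) := by
      calc 2 * (d - 1) ≤ 2 * (k * (k - 1) / 2) := by omega
        _ ≤ k * (k - 1) := by
            rw [mul_comm]; exact Nat.div_mul_le_self _ _
    have h3 : 2 * (n : ℤ) ≤ (k : ℤ) ^ 2 + k := by
      have hk1 : (k : ℤ) = (n : ℤ) + 1 - d := by omega
      have hk0 : 1 ≤ k := by
        rcases Nat.eq_zero_or_pos k with h | h
        · rw [h] at h2; simp at h2; omega
        · exact h
      have h2' : 2 * ((d : ℤ) - 1) ≤ (k : ℤ) * ((k:ℤ) - 1) := by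
        zify [show 1 ≤ d by omega, hk0] at h2
        exact h2
      nlinarith [h2']
    have hceil : ⌈Real.sqrt (2 * (n : ℝ) + 1 / 4) + 1 / 2⌉ ≤ (k : ℤ) + 1 := by
      rw [Int.ceil_le]
      push_cast
      have : Real.sqrt (2 * (n : ℝ) + 1 / 4) ≤ (k : ℝ) + 1 / 2 := by
        rw [show ((k:ℝ) + 1/2) = Real.sqrt (((k:ℝ) + 1/2)^2) from
          (Real.sqrt_sq (by positivity)).symm]
        apply Real.sqrt_le_sqrt
        have h3' : 2 * (n : ℝ) ≤ (k : ℝ) ^ 2 + k := by exact_mod_cast h3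
        nlinarith
      linarith
    have hkd : (d : ℤ) = (n : ℤ) + 1 - k := by omega
    omega
  · -- d ≤ 1
    have hceil : ⌈Real.sqrt (2 * (n : ℝ) + 1 / 4) + 1 / 2⌉ ≤ (n : ℤ) + 1 := by
      rw [Int.ceil_le]
      push_cast
      have : Real.sqrt (2 * (n : ℝ) + 1 / 4) ≤ (n : ℝ) + 1 / 2 := by
        rw [show ((n:ℝ) + 1/2) = Real.sqrt (((n:ℝ) + 1/2)^2) from
          (Real.sqrt_sq (by positivity)).symm]
        apply Real.sqrt_le_sqrt
        have hn' : (1:ℝ) ≤ n := by exact_mod_cast hn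
        nlinarith
      linarith
    omega
end

section
/- For every integer n ≥ 2, one has hd(n) ≤ ⌈n/2⌉ + ⌊n/6⌋ + 4. -/
theorem stmt_18 (n : ℕ) (hn : 2 ≤ n) :
    hd n ≤ (n + 1) / 2 + n / 6 + 4 := by
  apply csSup_le'
  rintro d ⟨hd1, hd2⟩
  by_contra hlt
  push_neg at hlt
  rcases eq_or_lt_of_le hd1 with rfl | hdn
  · have key := hd2 1 le_rfl (by omega)
    rw [show n + 2 * 1 - 1 - (n + 1) = 0 by omega] at key
    simp [Nat.choose] at key
    omega
  · set s := d - (n + 1) / 2 with hs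
    have h1 : 1 ≤ s := by omega
    have h2 : s ≤ d / 2 := by omega
    have key := hd2 s h1 h2
    have hm : n + 2 * s - 1 - d ≤ d - 1 := by omega
    have st1 : Nat.choose (n + 2 * s - 1 - d) (2 * s) ≤ Nat.choose (d - 1) (2 * s) :=
      Nat.choose_le_choose _ hm
    have hpos : 0 < Nat.choose (d - 1) (2 * s - 1) := Nat.choose_pos (by omega)
    have heq := Nat.choose_succ_right_eq (d - 1) (2 * s - 1)
    rw [show 2 * s - 1 + 1 = 2 * s by omega, show d - 1 - (2 * s - 1) = d - 2 * s by omega]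
      at heq
    have hlt2 : d - 2 * s < 2 * s := by omega
    have st2 : Nat.choose (d - 1) (2 * s) < Nat.choose (d - 1) (2 * s - 1) := by
      have hmul : Nat.choose (d - 1) (2 * s) * (2 * s) <
          Nat.choose (d - 1) (2 * s - 1) * (2 * s) := by
        rw [heq]
        exact Nat.mul_lt_mul_of_le_of_lt le_rfl hlt2 hpos
      exact Nat.lt_of_mul_lt_mul_right hmul
    exact absurd (key.trans st1) (Nat.not_le.mpr st2)
end

section
/- The sequence hd(n)/n converges to 1/2 as n → ∞; that is, for every δ > 0 there exists n_δ such that |hd(n)/n − 1/2| < δ for all n ≥ n_δ. -/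
lemma hdSet_bddAbove (n : ℕ) :
    BddAbove {d : ℕ | d ≤ n + 1 ∧ ∀ s : ℕ, 1 ≤ s → s ≤ d / 2 →
      Nat.choose (d - 1) (2 * s - 1) ≤ Nat.choose (n + 2 * s - 1 - d) (2 * s)} :=
  ⟨n + 1, fun _ hd => hd.1⟩

lemma hd_mem (n : ℕ) :
    hd n ∈ {d : ℕ | d ≤ n + 1 ∧ ∀ s : ℕ, 1 ≤ s → s ≤ d / 2 →
      Nat.choose (d - 1) (2 * s - 1) ≤ Nat.choose (n + 2 * s - 1 - d) (2 * s)} := by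
  have h0 : 0 ∈ {d : ℕ | d ≤ n + 1 ∧ ∀ s : ℕ, 1 ≤ s → s ≤ d / 2 →
      Nat.choose (d - 1) (2 * s - 1) ≤ Nat.choose (n + 2 * s - 1 - d) (2 * s)} :=
    ⟨by omega, fun s hs1 hs2 => by omega⟩
  exact Nat.sSup_mem ⟨0, h0⟩ (hdSet_bddAbove n)

/-- Lower bound: `n / 2 ≤ hd n`. -/
lemma hd_lower (n : ℕ) : n / 2 ≤ hd n := by
  apply le_csSup (hdSet_bddAbove n)
  constructor
  · omega
  · intro s hs1 hs2
    set d := n / 2 with hdd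
    have h2s : 2 * s ≤ d := by omega
    have h2d : 2 * d ≤ n := by omega
    obtain ⟨j, rfl⟩ : ∃ j, s = j + 1 := ⟨s - 1, by omega⟩
    have e1 : 2 * (j + 1) - 1 = 2 * j + 1 := by omega
    have e2 : 2 * (j + 1) = 2 * j + 2 := by omega
    rw [e1, e2]
    have hpas : Nat.choose (d + 2 * j + 1) (2 * j + 2)
        = Nat.choose (d + 2 * j) (2 * j + 1) + Nat.choose (d + 2 * j) (2 * j + 2) := by
      have h := Nat.choose_succ_succ' (d + 2 * j) (2 * j + 1)
      rwa [show 2 * j + 1 + 1 = 2 * j + 2 by omega] at h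
    calc Nat.choose (d - 1) (2 * j + 1)
        ≤ Nat.choose (d + 2 * j) (2 * j + 1) :=
          Nat.choose_le_choose _ (by omega)
      _ ≤ Nat.choose (d + 2 * j + 1) (2 * j + 2) := by omega
      _ ≤ Nat.choose (n + 2 * (j + 1) - 1 - d) (2 * j + 2) :=
          Nat.choose_le_choose _ (by omega)

set_option maxHeartbeats 2000000 in
lemma hd_upper_aux (k n d : ℕ) (hk : 6 ≤ k) (hn : 64 * k ^ 3 ≤ n)
    (hdle : d ≤ n + 1)
    (hall : ∀ s : ℕ, 1 ≤ s → s ≤ d / 2 →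
      Nat.choose (d - 1) (2 * s - 1) ≤ Nat.choose (n + 2 * s - 1 - d) (2 * s)) :
    2 * k * d ≤ (k + 2) * n := by
  by_contra hcon
  push_neg at hcon
  have hk3 : 216 ≤ k ^ 3 := by
    have : 6 ^ 3 ≤ k ^ 3 := Nat.pow_le_pow_left hk 3
    omega
  -- d > n/2
  have hdn2 : n < 2 * d := by
    have h1 : k * n ≤ (k + 2) * n := Nat.mul_le_mul_right n (by omega)
    have h2 : k * n < k * (2 * d) := by
      calc k * n ≤ (k + 2) * n := h1
      _ < 2 * k * d := hcon
      _ = k * (2 * d) := by ring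
    exact Nat.lt_of_mul_lt_mul_left h2
  have hdbig : 32 * k ^ 3 ≤ d := by omega
  -- rule out d ≥ n
  have hdltn : d < n := by
    by_contra hge
    push_neg at hge
    have h1 : (1:ℕ) ≤ d / 2 := by omega
    have := hall 1 le_rfl h1
    rw [Nat.choose_one_right] at this
    have h0 : Nat.choose (n + 2 * 1 - 1 - d) (2 * 1) = 0 := by
      apply Nat.choose_eq_zero_of_lt; omega
    omega
  set a := n - d with ha
  have ha1 : 1 ≤ a := by omega
  -- choose s
  obtain ⟨s, hs1, hsd2, hdivlt, hdivge⟩ :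
      ∃ s, 1 ≤ s ∧ s ≤ d / 2 ∧ d < 2 * k * s ∧ 2 * k * s ≤ d + 2 * k := by
    refine ⟨d / (2 * k) + 1, Nat.le_add_left 1 _, ?_, ?_, ?_⟩
    · have h12 : d / (2 * k) ≤ d / 12 := Nat.div_le_div_left (by omega) (by omega)
      have h13 : d / 12 + 1 ≤ d / 2 := by omega
      exact le_trans (Nat.add_le_add_right h12 1) h13
    · have h := (Nat.div_lt_iff_lt_mul (show 0 < 2 * k by omega)).mp
        (Nat.lt_succ_self (d / (2 * k)))
      rw [mul_comm]; exact h
    · have h := Nat.div_mul_le_self d (2 * k)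
      calc 2 * k * (d / (2 * k) + 1) = d / (2 * k) * (2 * k) + 2 * k := by ring
      _ ≤ d + 2 * k := Nat.add_le_add_right h _
  have h2sd : 2 * s ≤ d := by omega
  -- the condition at s
  have hcond := hall s hs1 hsd2
  have heq : n + 2 * s - 1 - d = a + 2 * s - 1 := by omega
  rw [heq] at hcond
  -- key natural-number inequality
  obtain ⟨u, hu⟩ : ∃ u, 2 * s = u + 1 := ⟨2 * s - 1, by omega⟩
  have hu1 : 2 * s - 1 = u := by omega
  rw [hu1, hu] at hcond
  have hB : (d - u) ^ u ≤ u.factorial * Nat.choose (d - 1) u := by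
    have h := Nat.pow_sub_le_descFactorial (d - 1) u
    rw [Nat.descFactorial_eq_factorial_mul_choose] at h
    have e : d - 1 + 1 - u = d - u := by omega
    rwa [e] at h
  have hA : (u + 1).factorial * Nat.choose (a + u) (u + 1)
      ≤ (a + u) ^ (u + 1) := by
    have h := Nat.descFactorial_le_pow (a + u) (u + 1)
    rwa [Nat.descFactorial_eq_factorial_mul_choose] at h
  have hcond' : Nat.choose (d - 1) u ≤ Nat.choose (a + u) (u + 1) := by
    rwa [show a + (u + 1) - 1 = a + u by omega] at hcond
  have key : (u + 1) * (d - u) ^ u ≤ (a + u) ^ (u + 1) := by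
    calc (u + 1) * (d - u) ^ u
        ≤ (u + 1) * (u.factorial * Nat.choose (d - 1) u) :=
          Nat.mul_le_mul_left _ hB
      _ = (u + 1).factorial * Nat.choose (d - 1) u := by
          rw [Nat.factorial_succ]; ring
      _ ≤ (u + 1).factorial * Nat.choose (a + u) (u + 1) :=
          Nat.mul_le_mul_left _ hcond'
      _ ≤ (a + u) ^ (u + 1) := hA
  -- pass to the reals
  have hu1' : 1 ≤ u := by omega
  have hud : u + 1 ≤ d := by omega
  have hdivlt' : d < k * (u + 1) := by
    rw [show k * (u + 1) = 2 * k * s by rw [← hu]; ring]; exact hdivlt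
  have hdivge' : k * (u + 1) ≤ d + 2 * k := by
    rw [show k * (u + 1) = 2 * k * s by rw [← hu]; ring]; exact hdivge
  clear hdivlt hdivge hu hu1 hcond hs1 hsd2 h2sd heq hB hA hcond' hall
  set K : ℝ := (k : ℝ) with hK
  have hKpos : (0:ℝ) < K := by rw [hK]; exact_mod_cast (by omega : 0 < k)
  have hK6 : (6:ℝ) ≤ K := by rw [hK]; exact_mod_cast hk
  set U : ℝ := ((u : ℝ) + 1) with hU
  set A : ℝ := ((a : ℝ) + u) with hAdef
  set B : ℝ := ((d : ℝ) - u) with hBdef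
  have hAnat : ((a + u : ℕ) : ℝ) = A := by push_cast; rw [hAdef]
  have hBnat : ((d - u : ℕ) : ℝ) = B := by
    rw [Nat.cast_sub (by omega : u ≤ d)]
  have key' : U * B ^ u ≤ A ^ (u + 1) := by
    rw [← hAnat, ← hBnat, hU]
    exact_mod_cast key
  have hA1 : (1:ℝ) ≤ A := by
    rw [← hAnat]
    exact_mod_cast (by omega : (1:ℕ) ≤ a + u)
  -- basic real facts
  have hcast1 : (K + 2) * n < 2 * K * d := by
    rw [hK]; exact_mod_cast hcon
  have hna : (n:ℝ) = (a:ℝ) + d := by exact_mod_cast (by omega : n = a + d)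
  have hKa : (K + 2) * a ≤ (K - 2) * (d:ℝ) := by nlinarith [hcast1, hna]
  have hslo : (d:ℝ) < K * U := by
    rw [hK, hU]
    calc (d:ℝ) < ((k * (u + 1) : ℕ) : ℝ) := by exact_mod_cast hdivlt'
    _ = (k:ℝ) * ((u:ℝ) + 1) := by push_cast; ring
  have hshi : K * U ≤ (d:ℝ) + 2 * K := by
    rw [hK, hU]
    calc (k:ℝ) * ((u:ℝ) + 1) = ((k * (u + 1) : ℕ) : ℝ) := by push_cast; ring
    _ ≤ (d:ℝ) + 2 * K := by rw [hK]; exact_mod_cast hdivge'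
  have hdbigR : 32 * K ^ 3 ≤ (d:ℝ) := by rw [hK]; exact_mod_cast hdbig
  have hU2 : (2:ℝ) ≤ U := by
    rw [hU]; exact_mod_cast (by omega : (2:ℕ) ≤ u + 1)
  have hUu : U ≤ 2 * (u:ℝ) := by
    rw [hU]
    have h : (1:ℝ) ≤ (u:ℝ) := by exact_mod_cast hu1'
    linarith
  have hAup : A ≤ 2 * (d:ℝ) := by
    have h1 : (a:ℝ) ≤ (d:ℝ) := by nlinarith [hKa, hK6]
    have h2 : (u:ℝ) ≤ (d:ℝ) := by exact_mod_cast (by omega : u ≤ d)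
    rw [hAdef]; linarith
  -- step 1 : B ≥ (1 + 1/(4K)) A
  have h4K : (0:ℝ) < 4 * K := by linarith
  have hshi' : K * (u:ℝ) ≤ (d:ℝ) + K := by
    rw [hU] at hshi; linarith
  have goal4 : (4 * K + 1) * A ≤ (4 * K) * B := by
    rw [hAdef, hBdef]
    have c1 : K * (4*K+1) * ((K+2) * a) ≤ K * (4*K+1) * ((K-2) * d) :=
      mul_le_mul_of_nonneg_left hKa (by positivity)
    have c2 : (8*K+1) * (K+2) * (K * u) ≤ (8*K+1) * (K+2) * ((d:ℝ) + K) :=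
      mul_le_mul_of_nonneg_left hshi' (by positivity)
    have hcoef : (0:ℝ) ≤ 7*K^2 - 15*K - 2 := by nlinarith [hK6]
    have c3 : (7*K^2 - 15*K - 2) * (32 * K^3) ≤ (7*K^2 - 15*K - 2) * d :=
      mul_le_mul_of_nonneg_left hdbigR hcoef
    have hpoly : (8*K+1) * (K+2) * K ≤ (7*K^2 - 15*K - 2) * (32 * K^3) := by
      have m4 : K^4 * 6 ≤ K^4 * K := mul_le_mul_of_nonneg_left hK6 (by positivity)
      have m3 : K^3 * 6 ≤ K^3 * K := mul_le_mul_of_nonneg_left hK6 (by positivity)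
      have m2 : K^2 * 6 ≤ K^2 * K := mul_le_mul_of_nonneg_left hK6 (by positivity)
      have m1 : K * 6 ≤ K * K := mul_le_mul_of_nonneg_left hK6 (by positivity)
      nlinarith [m1, m2, m3, m4, hK6, hKpos]
    nlinarith [c1, c2, c3, hpoly, mul_pos hKpos (show (0:ℝ) < K + 2 by linarith)]
  have step1 : (1 + 1 / (4 * K)) * A ≤ B := by
    have e : (1 + 1 / (4 * K)) * A = ((4 * K + 1) * A) / (4 * K) := by
      field_simp
    rw [e, div_le_iff₀ h4K]
    nlinarith [goal4]
  -- step 2 : A ≥ U (1 + 1/(4K))^u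
  have hx0 : (0:ℝ) ≤ 1 / (4 * K) := by positivity
  have hApos : (0:ℝ) < A := lt_of_lt_of_le one_pos hA1
  have step2 : U * (1 + 1 / (4 * K)) ^ u ≤ A := by
    have hpow : ((1 + 1 / (4 * K)) * A) ^ u ≤ B ^ u :=
      pow_le_pow_left₀ (by positivity) step1 _
    have h1 : U * ((1 + 1 / (4 * K)) * A) ^ u ≤ A ^ (u + 1) := by
      calc U * ((1 + 1 / (4 * K)) * A) ^ u
          ≤ U * B ^ u := mul_le_mul_of_nonneg_left hpow (by linarith)
        _ ≤ A ^ (u + 1) := key'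
    rw [mul_pow, ← mul_assoc, pow_succ'] at h1
    exact le_of_mul_le_mul_right h1 (pow_pos hApos _)
  -- Bernoulli
  have hbern : 1 + (u : ℝ) * (1 / (4 * K)) ≤ (1 + 1 / (4 * K)) ^ u :=
    one_add_mul_le_pow (by linarith) _
  have hAlow : U * ((u:ℝ)) * (1 / (4 * K)) ≤ A := by
    calc U * (u:ℝ) * (1 / (4 * K))
        ≤ U * (1 + (u:ℝ) * (1 / (4 * K))) := by
          rw [mul_assoc]
          apply mul_le_mul_of_nonneg_left _ (by linarith)
          nlinarith [hx0]
      _ ≤ U * (1 + 1 / (4 * K)) ^ u :=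
          mul_le_mul_of_nonneg_left hbern (by linarith)
      _ ≤ A := step2
  -- final contradiction
  have h5 : U * (u:ℝ) ≤ 4 * K * A := by
    rw [mul_one_div, div_le_iff₀ h4K] at hAlow
    linarith
  have hS32 : 32 * K ^ 2 < U := by
    have h1 : 32 * K ^ 2 * K ≤ (d:ℝ) := by nlinarith [hdbigR]
    nlinarith [hslo, hKpos]
  have h6 : 32 * K ^ 2 * (d:ℝ) < U * (K * U) :=
    mul_lt_mul'' hS32 hslo (by positivity) (by linarith)
  have hKK : (0:ℝ) < K * K := mul_pos hKpos hKpos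
  -- U·u ≤ 4KA ≤ 8Kd, and 32K²d < KU² ⟹ 32Kd < U²; but U·u ≥ U²/2, so U²/2 ≤ 8Kd < U²/4
  nlinarith [h5, h6, hAup, hU2, hUu, hKpos, hdbigR, hKK,
    mul_le_mul_of_nonneg_left hAup (by linarith : (0:ℝ) ≤ 4 * K),
    mul_le_mul_of_nonneg_left h5 (by linarith : (0:ℝ) ≤ 4 * K),
    mul_pos hKpos (show (0:ℝ) < U by linarith)]

/-- Upper bound: for `k ≥ 6` and `n ≥ 64 k³`, `2 k · hd n ≤ (k + 2) n`. -/
lemma hd_upper (k n : ℕ) (hk : 6 ≤ k) (hn : 64 * k ^ 3 ≤ n) :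
    2 * k * hd n ≤ (k + 2) * n :=
  hd_upper_aux k n (hd n) hk hn (hd_mem n).1 (hd_mem n).2

theorem stmt_19 :
    ∀ δ : ℝ, 0 < δ → ∃ N : ℕ, ∀ n : ℕ, N ≤ n →
      |(hd n : ℝ) / (n : ℝ) - 1 / 2| < δ := by
  intro δ hδ
  obtain ⟨k, hk6, hkδ⟩ : ∃ k : ℕ, 6 ≤ k ∧ 1 / (k:ℝ) < δ / 2 := by
    obtain ⟨k0, hk0⟩ := exists_nat_gt (2 / δ)
    refine ⟨k0 + 6, by omega, ?_⟩
    have h1 : 2 / δ < ((k0 + 6 : ℕ) : ℝ) := by push_cast; push_cast at hk0; linarith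
    have h2 : (0:ℝ) < ((k0 + 6 : ℕ) : ℝ) := by positivity
    rw [div_lt_iff₀ hδ] at h1
    rw [div_lt_div_iff₀ h2 (by norm_num : (0:ℝ) < 2)]
    nlinarith
  obtain ⟨m, hm⟩ := exists_nat_gt (1 / δ)
  refine ⟨max (64 * k ^ 3) (m + 1), fun n hn => ?_⟩
  have hn1 : 64 * k ^ 3 ≤ n := le_trans (le_max_left _ _) hn
  have hnm : m + 1 ≤ n := le_trans (le_max_right _ _) hn
  have hn0 : (0:ℝ) < n := by exact_mod_cast (by omega : 0 < n)
  have hup := hd_upper k n hk6 hn1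
  have hlo := hd_lower n
  have hkR : (0:ℝ) < (k:ℝ) := by exact_mod_cast (by omega : 0 < k)
  have hδn : 1 / δ < (n:ℝ) := by
    have h1 : (m:ℝ) < n := by exact_mod_cast (by omega : m < n)
    linarith
  rw [abs_lt]
  constructor
  · -- lower : hd/n - 1/2 > -δ
    have hcastlo : (n:ℝ) ≤ 2 * (hd n : ℝ) + 1 := by
      exact_mod_cast (by omega : n ≤ 2 * hd n + 1)
    have hB1 : 1 < (n:ℝ) * δ := by
      rw [div_lt_iff₀ hδ] at hδn; linarith
    have h7 : (1 / 2 - δ) * n < (hd n : ℝ) := by nlinarith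
    have h8 : (1 / 2 - δ) < (hd n : ℝ) / n := by
      rw [lt_div_iff₀ hn0]; linarith
    linarith
  · -- upper
    have h2 : 2 * (k:ℝ) * (hd n : ℝ) ≤ ((k:ℝ) + 2) * n := by exact_mod_cast hup
    have h1 : (hd n : ℝ) / n ≤ 1 / 2 + 1 / k := by
      rw [div_le_iff₀ hn0, div_add_div _ _ (by norm_num) (ne_of_gt hkR),
        div_mul_eq_mul_div, le_div_iff₀ (by positivity)]
      nlinarith
    have : 1 / (k:ℝ) < δ := by linarith
    linarith
end
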